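/- arXiv:2511.11566 — 6 statements merged into one kernel-verified Lean document; each statement's English description precedes it below -/
import Mathlib

section
/- Fix a ∈ ℝ and M > a. The supremum, over all pairs (μ, σ) ∈ ℝ × (0, ∞) such that the left-truncated Gaussian distribution on [a, ∞) with parameters μ, σ has mean M, of the variance of that distribution, equals (M − a)²; moreover this supremum is not attained. -/
open MeasureTheory Real Filter Set

/-- The error function. -/
noncomputable def erf (x : ℝ) : ℝ :=
  (2 / Real.sqrt Real.pi) * ∫ t in (0:ℝ)..x, Real.exp (-t ^ 2)

/-- `ξ(r) = erf(r/√2) + 1`. -/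
noncomputable def xi (r : ℝ) : ℝ := erf (r / Real.sqrt 2) + 1

/-- Normalizing constant of the left-truncated Gaussian on `[a, ∞)` with parameters `μ, σ`. -/
noncomputable def lZ (a μ σ : ℝ) : ℝ :=
  ∫ x in Set.Ici a, Real.exp (-(x - μ) ^ 2 / (2 * σ ^ 2))

/-- Mean of the left-truncated Gaussian on `[a, ∞)` with parameters `μ, σ`. -/
noncomputable def lMean (a μ σ : ℝ) : ℝ :=
  (∫ x in Set.Ici a, x * Real.exp (-(x - μ) ^ 2 / (2 * σ ^ 2))) / lZ a μ σ

/-- Variance of the left-truncated Gaussian on `[a, ∞)` with parameters `μ, σ`. -/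
noncomputable def lVar (a μ σ : ℝ) : ℝ :=
  (∫ x in Set.Ici a, (x - lMean a μ σ) ^ 2 * Real.exp (-(x - μ) ^ 2 / (2 * σ ^ 2))) / lZ a μ σ

lemma gint : Integrable fun t : ℝ => Real.exp (-t^2/2) := by
  have h := integrable_exp_neg_mul_sq (b := (1:ℝ)/2) (by norm_num)
  refine h.congr (ae_of_all _ fun t => ?_)
  show Real.exp (-(1/2:ℝ) * t^2) = Real.exp (-t^2/2)
  rw [show -(1/2:ℝ) * t ^ 2 = -t^2/2 by ring]

lemma gmint : Integrable fun t : ℝ => t * Real.exp (-t^2/2) := by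
  have h := integrable_mul_exp_neg_mul_sq (b := (1:ℝ)/2) (by norm_num)
  refine h.congr (ae_of_all _ fun t => ?_)
  show t * Real.exp (-(1/2:ℝ) * t^2) = t * Real.exp (-t^2/2)
  rw [show -(1/2:ℝ) * t ^ 2 = -t^2/2 by ring]

noncomputable def Q (x : ℝ) : ℝ := ∫ t in Set.Ioi x, Real.exp (-t^2/2)

lemma Qpos (x : ℝ) : 0 < Q x := by
  rw [Q]
  rw [setIntegral_pos_iff_support_of_nonneg_ae (ae_of_all _ fun t => (Real.exp_pos _).le) gint.integrableOn]
  have : (Function.support fun t : ℝ => Real.exp (-t^2/2)) = Set.univ := by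
    ext t; simp [Function.support, (Real.exp_pos _).ne']
  rw [this]
  simp [Real.volume_Ioi]

lemma Qeq (x : ℝ) : Q x = Q 0 - ∫ t in (0:ℝ)..x, Real.exp (-t^2/2) := by
  have h1 := intervalIntegral.integral_Iic_add_Ioi (b := x) gint.integrableOn gint.integrableOn
  have h2 := intervalIntegral.integral_Iic_add_Ioi (b := (0:ℝ)) gint.integrableOn gint.integrableOn
  have h3 := intervalIntegral.integral_Iic_sub_Iic (μ := volume)
    (f := fun t : ℝ => Real.exp (-t^2/2)) (a := (0:ℝ)) (b := x) gint.integrableOn gint.integrableOn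
  rw [Q, Q, ← h3]
  linarith [h1, h2]

lemma Qderiv (x : ℝ) : HasDerivAt Q (-(Real.exp (-x^2/2))) x := by
  have hc : Continuous fun t : ℝ => Real.exp (-t^2/2) := by continuity
  have hF : HasDerivAt (fun u => ∫ t in (0:ℝ)..u, Real.exp (-t^2/2)) (Real.exp (-x^2/2)) x := by
    refine intervalIntegral.integral_hasDerivAt_right (hc.intervalIntegrable _ _)
      (hc.stronglyMeasurableAtFilter _ _) hc.continuousAt
  have : HasDerivAt (fun u => Q 0 - ∫ t in (0:ℝ)..u, Real.exp (-t^2/2)) (-(Real.exp (-x^2/2))) x := by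
    exact ((hasDerivAt_const x (Q 0)).sub hF).congr_deriv (by ring)
  exact this.congr_of_eventuallyEq (Eventually.of_forall fun y => Qeq y)

lemma Qcont : Continuous Q := by
  have : ∀ x, HasDerivAt Q (-(Real.exp (-x^2/2))) x := Qderiv
  exact continuous_iff_continuousAt.2 fun x => (this x).continuousAt

lemma exp_deriv_aux (x : ℝ) : HasDerivAt (fun t : ℝ => -Real.exp (-t^2/2)) (x * Real.exp (-x^2/2)) x := by
  have h1 : HasDerivAt (fun t : ℝ => -t^2/2) (-x) x := by
    have := ((hasDerivAt_pow 2 x).neg).div_const 2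
    simpa using this.congr_deriv (by ring)
  have h2 := (h1.exp).neg
  exact h2.congr_deriv (by ring)

lemma tailint (x : ℝ) : ∫ t in Set.Ioi x, t * Real.exp (-t^2/2) = Real.exp (-x^2/2) := by
  have h := integral_Ioi_of_hasDerivAt_of_tendsto' (f := fun t : ℝ => -Real.exp (-t^2/2))
    (f' := fun t => t * Real.exp (-t^2/2)) (a := x) (m := 0)
    (fun t _ => exp_deriv_aux t) gmint.integrableOn ?_
  · rw [h]; ring
  · have h1 : Tendsto (fun t : ℝ => -t^2/2) atTop atBot := by
      have := (tendsto_pow_atTop (n := 2) two_ne_zero).atTop_div_const (by norm_num : (0:ℝ) < 2)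
      exact tendsto_neg_atBot_iff.mpr this |>.congr (fun t => by ring)
    have h2 := (Real.tendsto_exp_atBot.comp h1).neg
    simpa using h2

lemma Qbound {x : ℝ} (hx : 0 < x) : Q x ≤ Real.exp (-x^2/2) / x := by
  have mono : Q x ≤ ∫ t in Set.Ioi x, x⁻¹ * (t * Real.exp (-t^2/2)) := by
    rw [Q]
    refine setIntegral_mono_on gint.integrableOn
      ((gmint.const_mul x⁻¹).integrableOn) measurableSet_Ioi (fun t ht => ?_)
    have ht' : x < t := ht
    have h1 : (1:ℝ) ≤ x⁻¹ * t := by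
      rw [inv_mul_eq_div, le_div_iff₀ hx]; linarith
    nlinarith [Real.exp_pos (-t^2/2), h1]
  rw [MeasureTheory.integral_const_mul, tailint] at mono
  rw [div_eq_inv_mul]; linarith

lemma gtend : Tendsto (fun t : ℝ => Real.exp (-t^2/2)) atTop (nhds 0) := by
  have h1 : Tendsto (fun t : ℝ => -t^2/2) atTop atBot := by
    have := (tendsto_pow_atTop (n := 2) two_ne_zero).atTop_div_const (by norm_num : (0:ℝ) < 2)
    exact tendsto_neg_atBot_iff.mpr this |>.congr (fun t => by ring)
  exact Real.tendsto_exp_atBot.comp h1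

lemma Qtop : Tendsto Q atTop (nhds 0) := by
  refine tendsto_of_tendsto_of_tendsto_of_le_of_le' tendsto_const_nhds
    tendsto_inv_atTop_zero ?_ ?_
  · exact Eventually.of_forall fun x => (Qpos x).le
  · filter_upwards [eventually_gt_atTop (0:ℝ)] with x hx
    calc Q x ≤ Real.exp (-x^2/2) / x := Qbound hx
    _ ≤ 1 / x := by
      gcongr
      exact Real.exp_le_one_iff.mpr (by nlinarith)
    _ = x⁻¹ := one_div x

noncomputable def Rm (x : ℝ) : ℝ := Real.exp (x^2/2) * Q x

lemma Rpos (x : ℝ) : 0 < Rm x := mul_pos (Real.exp_pos _) (Qpos x)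

lemma Rderiv (x : ℝ) : HasDerivAt Rm (x * Rm x - 1) x := by
  have h1 : HasDerivAt (fun t : ℝ => t^2/2) x x := by
    have := (hasDerivAt_pow 2 x).div_const 2
    simpa using this.congr_deriv (by ring)
  have h2 := h1.exp.mul (Qderiv x)
  have key : Real.exp (x^2/2) * -Real.exp (-x^2/2) = -1 := by
    rw [mul_neg, ← Real.exp_add, show x^2/2 + -x^2/2 = 0 by ring, Real.exp_zero]
  have goal2 : HasDerivAt (fun y => Real.exp (y^2/2) * Q y) (x * Rm x - 1) x := by
    refine h2.congr_deriv ?_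
    rw [Rm, key]
    ring
  exact goal2

lemma Rbound {x : ℝ} (hx : 0 < x) : Rm x ≤ 1 / x := by
  have := Qbound hx
  rw [Rm]
  calc Real.exp (x^2/2) * Q x ≤ Real.exp (x^2/2) * (Real.exp (-x^2/2)/x) := by
        exact mul_le_mul_of_nonneg_left this (Real.exp_pos _).le
    _ = 1 / x := by
        rw [mul_div_assoc', ← Real.exp_add, show x^2/2 + -x^2/2 = 0 by ring, Real.exp_zero]

lemma Rtop : Tendsto Rm atTop (nhds 0) := by
  refine tendsto_of_tendsto_of_tendsto_of_le_of_le' tendsto_const_nhds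
    tendsto_inv_atTop_zero ?_ ?_
  · exact Eventually.of_forall fun x => (Rpos x).le
  · filter_upwards [eventually_gt_atTop (0:ℝ)] with x hx
    simpa [one_div] using Rbound hx

lemma neg_on_Ioi {b : ℝ} {G G' : ℝ → ℝ} (hd : ∀ x ∈ Set.Ioi b, HasDerivAt G (G' x) x)
    (hpos : ∀ x ∈ Set.Ioi b, 0 < G' x) (h0 : Tendsto G atTop (nhds 0)) :
    ∀ x ∈ Set.Ioi b, G x < 0 := by
  have hmono : StrictMonoOn G (Set.Ioi b) := by
    refine strictMonoOn_of_deriv_pos (convex_Ioi b) ?_ ?_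
    · exact fun x hx => ((hd x hx).continuousAt).continuousWithinAt
    · intro x hx
      rw [interior_Ioi] at hx
      rw [(hd x hx).deriv]
      exact hpos x hx
  intro x hx
  have hx' : b < x := hx
  have h1 : G x < G (x + 1) := hmono hx (Set.mem_Ioi.mpr (by linarith)) (by linarith)
  have h2 : G (x + 1) ≤ 0 := by
    refine ge_of_tendsto h0 ?_
    filter_upwards [eventually_gt_atTop (x + 1)] with y hy
    exact (hmono (Set.mem_Ioi.mpr (by linarith)) (Set.mem_Ioi.mpr (by linarith)) hy).le
  linarith

lemma sqrt8_aux (x : ℝ) : 0 < Real.sqrt (x^2 + 8) ∧ (Real.sqrt (x^2+8))^2 = x^2 + 8 := by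
  constructor
  · exact Real.sqrt_pos.mpr (by positivity)
  · exact Real.sq_sqrt (by positivity)

lemma u_deriv (x : ℝ) : HasDerivAt (fun x => Real.sqrt (x^2 + 8)) (x / Real.sqrt (x^2+8)) x := by
  have h1 : HasDerivAt (fun x : ℝ => x^2 + 8) (2*x) x := by
    simpa using ((hasDerivAt_pow 2 x).add_const 8).congr_deriv (by ring)
  have h2 := h1.sqrt (by positivity)
  exact h2.congr_deriv (by rw [div_eq_div_iff] <;> [ring; positivity; positivity])


lemma d_pos {x : ℝ} (hx : -1 < x) : 0 < 3*x + Real.sqrt (x^2+8) := by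
  obtain ⟨hupos, hu⟩ := sqrt8_aux x
  nlinarith [hupos, hu, sq_nonneg (x+1), sq_nonneg (x-1), sq_nonneg (Real.sqrt (x^2+8) - 3*x)]

lemma d_deriv (x : ℝ) : HasDerivAt (fun y => 3*y + Real.sqrt (y^2+8)) (3 + x / Real.sqrt (x^2+8)) x := by
  have h1 : HasDerivAt (fun y : ℝ => 3*y) 3 x := by
    simpa using (hasDerivAt_id x).const_mul 3
  exact h1.add (u_deriv x)

lemma sampford_G_deriv {x : ℝ} (hx : -1 < x) :
    HasDerivAt (fun y => Q y - (4 / (3*y + Real.sqrt (y^2+8))) * Real.exp (-y^2/2))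
      (Real.exp (-x^2/2) * ((3*x^2*Real.sqrt (x^2+8) - 2*x*(Real.sqrt (x^2+8))^2
        - (Real.sqrt (x^2+8))^3 + 12*Real.sqrt (x^2+8) + 4*x) / (Real.sqrt (x^2+8)*(3*x + Real.sqrt (x^2+8))^2))) x := by
  obtain ⟨hupos, hu⟩ := sqrt8_aux x
  set u := Real.sqrt (x^2+8) with hudef
  have hd := d_pos hx
  have hder1 : HasDerivAt (fun y => (4:ℝ) / (3*y + Real.sqrt (y^2+8)))
      ((0 * (3*x + u) - 4 * (3 + x / u)) / (3*x + u)^2) x :=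
    (hasDerivAt_const x (4:ℝ)).div (d_deriv x) hd.ne'
  have hg : HasDerivAt (fun y : ℝ => Real.exp (-y^2/2)) (-(x * Real.exp (-x^2/2))) x := by
    have := exp_deriv_aux x
    simpa [Pi.neg_def] using this.neg
  have := (Qderiv x).sub (hder1.mul hg)
  refine this.congr_deriv ?_
  rw [← hudef]
  have hd' : 3*x + u ≠ 0 := hd.ne'
  have hu0 : u ≠ 0 := hupos.ne'
  have hd3 : x*3 + u ≠ 0 := by rw [mul_comm]; exact hd'
  field_simp
  ring
  
lemma sampford (x : ℝ) : Rm x * (3*x + Real.sqrt (x^2+8)) < 4 := by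
  obtain ⟨hupos, hu⟩ := sqrt8_aux x
  rcases le_or_gt x (-1) with hx | hx
  · -- d ≤ 0 here
    have h9 : Real.sqrt (x^2+8) ≤ -3*x := by
      rw [show -3*x = Real.sqrt ((-3*x)^2) from (Real.sqrt_sq (by linarith)).symm]
      apply Real.sqrt_le_sqrt; nlinarith
    have : 3*x + Real.sqrt (x^2+8) ≤ 0 := by linarith
    nlinarith [Rpos x, mul_nonpos_of_nonneg_of_nonpos (Rpos x).le this]
  · -- main case via ODE comparison on Ioi (-1)
    have hG := neg_on_Ioi (b := -1)
      (G := fun y => Q y - (4 / (3*y + Real.sqrt (y^2+8))) * Real.exp (-y^2/2))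
      (G' := fun y => Real.exp (-y^2/2) * ((3*y^2*Real.sqrt (y^2+8) - 2*y*(Real.sqrt (y^2+8))^2
        - (Real.sqrt (y^2+8))^3 + 12*Real.sqrt (y^2+8) + 4*y) / (Real.sqrt (y^2+8)*(3*y + Real.sqrt (y^2+8))^2)))
      (fun y hy => sampford_G_deriv hy) ?_ ?_ x hx
    · have hd := d_pos hx
      have h1 : Q x < (4 / (3*x + Real.sqrt (x^2+8))) * Real.exp (-x^2/2) := by
        have := hG; linarith [hG]
      rw [Rm]
      rw [← lt_div_iff₀ hd] at *
      calc Real.exp (x^2/2) * Q x < Real.exp (x^2/2) * ((4 / (3*x + Real.sqrt (x^2+8))) * Real.exp (-x^2/2)) := by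
            exact mul_lt_mul_of_pos_left h1 (Real.exp_pos _)
        _ = 4 / (3*x + Real.sqrt (x^2+8)) := by
            rw [mul_comm (4 / (3*x + Real.sqrt (x^2+8)))]
            rw [← mul_assoc, ← Real.exp_add, show x^2/2 + -x^2/2 = 0 by ring, Real.exp_zero, one_mul]
    · -- positivity of G'
      intro y hy
      have hy' : (-1:ℝ) < y := hy
      obtain ⟨hvpos, hv⟩ := sqrt8_aux y
      have hd := d_pos hy'
      apply mul_pos (Real.exp_pos _)
      apply div_pos ?_ (by positivity)
      set v := Real.sqrt (y^2+8)
      have ha : 0 < v*(y^2+2) := by positivity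
      have hsq : (v*(y^2+2))^2 - (y*(y^2+6))^2 = 32 := by
        linear_combination (y^2+2)^2 * hv
      have key : 0 < v*(y^2+2) - y*(y^2+6) := by
        nlinarith [ha, hsq, sq_nonneg (v*(y^2+2) + y*(y^2+6)), sq_nonneg (v*(y^2+2) - y*(y^2+6))]
      have e1 : 3*y^2*v - 2*y*v^2 - v^3 + 12*v + 4*y = 2*(v*(y^2+2) - y*(y^2+6)) := by
        linear_combination (-(v + 2*y)) * hv
      linarith [e1, key]
    · -- tendsto 0
      have h1 : Tendsto (fun y => (4 / (3*y + Real.sqrt (y^2+8))) * Real.exp (-y^2/2)) atTop (nhds 0) := by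
        refine tendsto_of_tendsto_of_tendsto_of_le_of_le' tendsto_const_nhds
          (by simpa using gtend.const_mul (4/3:ℝ)) ?_ ?_
        · filter_upwards [eventually_gt_atTop (1:ℝ)] with y hy
          have hd := d_pos (by linarith : (-1:ℝ) < y)
          positivity
        · filter_upwards [eventually_gt_atTop (1:ℝ)] with y hy
          obtain ⟨hvpos, hv⟩ := sqrt8_aux y
          have h3 : (3:ℝ) ≤ 3*y + Real.sqrt (y^2+8) := by nlinarith
          have : 4 / (3*y + Real.sqrt (y^2+8)) ≤ 4/3 := by
            apply div_le_div_of_nonneg_left (by norm_num) (by norm_num) h3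
          exact mul_le_mul_of_nonneg_right this (Real.exp_pos _).le
      have := Qtop.sub h1
      simpa using this

lemma xRlt (x : ℝ) : x * Rm x < 1 := by
  obtain ⟨hupos, hu⟩ := sqrt8_aux x
  have hs := sampford x
  have hxu : x ≤ Real.sqrt (x^2+8) := by nlinarith
  nlinarith [Rpos x]

noncomputable def c4 (x : ℝ) : ℝ := (x^3+5*x)/(x^4+6*x^2+3)

lemma c4_deriv (x : ℝ) : HasDerivAt c4
    (((3*x^2+5) * (x^4+6*x^2+3) - (x^3+5*x)*(4*x^3+12*x)) / (x^4+6*x^2+3)^2) x := by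
  have hD : (0:ℝ) < x^4+6*x^2+3 := by positivity
  have h1 : HasDerivAt (fun y : ℝ => y^3+5*y) (3*x^2+5) x := by
    have := (hasDerivAt_pow 3 x).add ((hasDerivAt_id x).const_mul 5)
    exact this.congr_deriv (by norm_num)
  have h2 : HasDerivAt (fun y : ℝ => y^4+6*y^2+3) (4*x^3+12*x) x := by
    have := ((hasDerivAt_pow 4 x).add (((hasDerivAt_pow 2 x)).const_mul 6)).add_const 3
    simpa using this.congr_deriv (by ring)
  exact h1.div h2 hD.ne'

lemma c4_lt (x : ℝ) : c4 x < Rm x := by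
  have key : ∀ y : ℝ, c4 y * Real.exp (-y^2/2) - Q y < 0 := by
    intro y
    refine neg_on_Ioi (b := y - 1)
      (G := fun z => c4 z * Real.exp (-z^2/2) - Q z)
      (G' := fun z => Real.exp (-z^2/2) * (24 / (z^4+6*z^2+3)^2))
      ?_ ?_ ?_ y (by simp)
    · intro z _
      have hD : (0:ℝ) < z^4+6*z^2+3 := by positivity
      have hg : HasDerivAt (fun w : ℝ => Real.exp (-w^2/2)) (-(z * Real.exp (-z^2/2))) z := by
        simpa [Pi.neg_def] using (exp_deriv_aux z).neg
      have h := ((c4_deriv z).mul hg).sub (Qderiv z)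
      refine h.congr_deriv ?_
      rw [c4]
      field_simp
      ring
    · intro z _
      have hD : (0:ℝ) < z^4+6*z^2+3 := by positivity
      positivity
    · have h1 : Tendsto (fun z => c4 z * Real.exp (-z^2/2)) atTop (nhds 0) := by
        refine tendsto_of_tendsto_of_tendsto_of_le_of_le' tendsto_const_nhds
          gtend ?_ ?_
        · filter_upwards [eventually_gt_atTop (1:ℝ)] with z hz
          have hD : (0:ℝ) < z^4+6*z^2+3 := by positivity
          have h0 : (0:ℝ) ≤ c4 z := by rw [c4]; positivity
          positivity
        · filter_upwards [eventually_gt_atTop (1:ℝ)] with z hz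
          have hD : (0:ℝ) < z^4+6*z^2+3 := by positivity
          have hc : c4 z ≤ 1 := by
            rw [c4, div_le_one hD]; nlinarith
          have hc0 : (0:ℝ) ≤ c4 z := by rw [c4]; positivity
          nlinarith [Real.exp_pos (-z^2/2)]
      simpa using h1.sub Qtop
  have hy := key x
  have h2 : c4 x * Real.exp (-x^2/2) < Q x := by linarith
  rw [Rm]
  calc c4 x = Real.exp (x^2/2) * (c4 x * Real.exp (-x^2/2)) := by
        rw [← mul_assoc, mul_comm (Real.exp (x^2/2)), mul_assoc, ← Real.exp_add,
          show x^2/2 + -x^2/2 = 0 by ring, Real.exp_zero, mul_one]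
    _ < Real.exp (x^2/2) * Q x := mul_lt_mul_of_pos_left h2 (Real.exp_pos _)

lemma shift_Ioi (g : ℝ → ℝ) (c d : ℝ) :
    ∫ x in Set.Ioi c, g (x + d) = ∫ x in Set.Ioi (c + d), g x := by
  have h := (measurePreserving_add_right volume d).setIntegral_preimage_emb
    (MeasurableEquiv.addRight d).measurableEmbedding g (Set.Ioi (c + d))
  have hp : (fun x : ℝ => x + d) ⁻¹' Set.Ioi (c + d) = Set.Ioi c := by ext x; simp
  rw [← hp]; exact h

section TG
variable {a μ σ : ℝ}

lemma tg_int (hσ : 0 < σ) : Integrable fun x : ℝ => Real.exp (-(x-μ)^2/(2*σ^2)) := by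
  have hb : (0:ℝ) < 1/(2*σ^2) := by positivity
  have h := (integrable_exp_neg_mul_sq hb).comp_sub_right μ
  refine h.congr (ae_of_all _ fun x => ?_)
  show Real.exp (-(1/(2*σ^2)) * (x-μ)^2) = _
  rw [show -(1/(2*σ^2)) * (x-μ)^2 = -(x-μ)^2/(2*σ^2) by ring]

lemma tg_mint (hσ : 0 < σ) : Integrable fun x : ℝ => (x-μ) * Real.exp (-(x-μ)^2/(2*σ^2)) := by
  have hb : (0:ℝ) < 1/(2*σ^2) := by positivity
  have h := (integrable_mul_exp_neg_mul_sq hb).comp_sub_right μ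
  refine h.congr (ae_of_all _ fun x => ?_)
  show (x-μ) * Real.exp (-(1/(2*σ^2)) * (x-μ)^2) = _
  rw [show -(1/(2*σ^2)) * (x-μ)^2 = -(x-μ)^2/(2*σ^2) by ring]

lemma tg_sqint (hσ : 0 < σ) : Integrable fun x : ℝ => (x-μ)^2 * Real.exp (-(x-μ)^2/(2*σ^2)) := by
  have hb : (0:ℝ) < 1/(2*σ^2) := by positivity
  have h := (integrable_rpow_mul_exp_neg_mul_sq hb (s := 2) (by norm_num)).comp_sub_right μ
  refine h.congr (ae_of_all _ fun x => ?_)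
  show (x-μ) ^ (2:ℝ) * Real.exp (-(1/(2*σ^2)) * (x-μ)^2) = _
  have h1 : (x-μ) ^ (2:ℝ) = (x-μ) ^ (2:ℕ) := by
    rw [← Real.rpow_natCast (x-μ) 2]; norm_num
  rw [h1, show -(1/(2*σ^2)) * (x-μ)^2 = -(x-μ)^2/(2*σ^2) by ring]

lemma tg_xint (hσ : 0 < σ) : Integrable fun x : ℝ => x * Real.exp (-(x-μ)^2/(2*σ^2)) := by
  have h := (tg_mint (μ := μ) hσ).add ((tg_int (μ := μ) hσ).const_mul μ)
  refine h.congr (ae_of_all _ fun x => ?_)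
  show (x-μ) * Real.exp (-(x-μ)^2/(2*σ^2)) + μ * Real.exp (-(x-μ)^2/(2*σ^2)) = _
  ring

lemma tg_smint (hσ : 0 < σ) (m : ℝ) :
    Integrable fun x : ℝ => (x-m)^2 * Real.exp (-(x-μ)^2/(2*σ^2)) := by
  have h := ((tg_sqint (μ := μ) hσ).add ((tg_mint (μ := μ) hσ).const_mul (2*(μ-m)))).add
    ((tg_int (μ := μ) hσ).const_mul ((μ-m)^2))
  refine h.congr (ae_of_all _ fun x => ?_)
  show (x-μ)^2 * Real.exp (-(x-μ)^2/(2*σ^2)) + 2*(μ-m) * ((x-μ) * Real.exp (-(x-μ)^2/(2*σ^2)))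
      + (μ-m)^2 * Real.exp (-(x-μ)^2/(2*σ^2)) = _
  ring

lemma lZ_eq (hσ : 0 < σ) : lZ a μ σ = σ * Q ((a-μ)/σ) := by
  rw [lZ, MeasureTheory.integral_Ici_eq_integral_Ioi]
  have hne : σ ≠ 0 := hσ.ne'
  have h1 : ∫ x in Set.Ioi a, Real.exp (-(x-μ)^2/(2*σ^2))
      = ∫ x in Set.Ioi (a + -μ), Real.exp (-x^2/(2*σ^2)) := by
    rw [← shift_Ioi (fun t => Real.exp (-t^2/(2*σ^2))) a (-μ)]
    refine setIntegral_congr_fun measurableSet_Ioi (fun x _ => ?_)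
    show Real.exp (-(x-μ)^2/(2*σ^2)) = Real.exp (-(x + -μ)^2/(2*σ^2))
    rw [show x + -μ = x - μ from by ring]
  rw [h1, show a + -μ = a - μ from by ring]
  have h2 : ∫ x in Set.Ioi (a-μ), Real.exp (-x^2/(2*σ^2))
      = ∫ x in Set.Ioi (a-μ), Real.exp (-(σ⁻¹*x)^2/2) := by
    refine setIntegral_congr_fun measurableSet_Ioi (fun x _ => ?_)
    rw [show -(σ⁻¹*x)^2/2 = -x^2/(2*σ^2) from by field_simp [hne]]
  rw [h2, integral_comp_mul_left_Ioi (fun t => Real.exp (-t^2/2)) (a-μ) (inv_pos.mpr hσ)]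
  rw [smul_eq_mul, inv_inv, Q, show σ⁻¹ * (a-μ) = (a-μ)/σ from by rw [inv_mul_eq_div]]
end TG

section Moments
variable {a μ σ : ℝ}

lemma tg_inner_deriv (hσ : 0 < σ) (t : ℝ) :
    HasDerivAt (fun t : ℝ => -(t-μ)^2/(2*σ^2)) (-(t-μ)/σ^2) t := by
  have h1 : HasDerivAt (fun t : ℝ => t - μ) 1 t := (hasDerivAt_id t).sub_const μ
  have h2 := (h1.pow 2).neg.div_const (2*σ^2)
  refine h2.congr_deriv ?_
  field_simp; ring

lemma tg_tendsto (hσ : 0 < σ) (c : ℝ) :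
    Tendsto (fun t : ℝ => c * Real.exp (-(t-μ)^2/(2*σ^2))) atTop (nhds 0) := by
  have h1 : Tendsto (fun t : ℝ => -(t-μ)^2/(2*σ^2)) atTop atBot := by
    have hsq : Tendsto (fun t : ℝ => (t-μ)^2) atTop atTop :=
      (tendsto_pow_atTop two_ne_zero).comp (tendsto_atTop_add_const_right _ (-μ) tendsto_id)
        |>.congr (fun t => by simp [sub_eq_add_neg])
    have := hsq.atTop_div_const (by positivity : (0:ℝ) < 2*σ^2)
    exact tendsto_neg_atBot_iff.mpr this |>.congr (fun t => by ring)
  have := (Real.tendsto_exp_atBot.comp h1).const_mul c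
  simpa using this

lemma m1 (hσ : 0 < σ) : ∫ x in Set.Ici a, (x-μ) * Real.exp (-(x-μ)^2/(2*σ^2))
    = σ^2 * Real.exp (-((a-μ)/σ)^2/2) := by
  have hne : σ ≠ 0 := hσ.ne'
  rw [MeasureTheory.integral_Ici_eq_integral_Ioi]
  have hder : ∀ t : ℝ, HasDerivAt (fun t => -σ^2 * Real.exp (-(t-μ)^2/(2*σ^2)))
      ((t-μ) * Real.exp (-(t-μ)^2/(2*σ^2))) t := by
    intro t
    have := ((tg_inner_deriv (μ := μ) hσ t).exp).const_mul (-σ^2)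
    refine this.congr_deriv ?_
    field_simp
  have h := integral_Ioi_of_hasDerivAt_of_tendsto' (a := a) (m := 0)
    (fun t _ => hder t) (tg_mint (μ := μ) hσ).integrableOn (tg_tendsto hσ (-σ^2))
  rw [h]
  rw [show -((a-μ)/σ)^2/2 = -(a-μ)^2/(2*σ^2) from by field_simp [hne]]
  ring

lemma m2 (hσ : 0 < σ) : ∫ x in Set.Ici a, (x-μ)^2 * Real.exp (-(x-μ)^2/(2*σ^2))
    = σ^2 * lZ a μ σ + σ^2 * (a-μ) * Real.exp (-((a-μ)/σ)^2/2) := by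
  have hne : σ ≠ 0 := hσ.ne'
  have hder : ∀ t : ℝ, HasDerivAt (fun t => -σ^2 * (t-μ) * Real.exp (-(t-μ)^2/(2*σ^2)))
      ((t-μ)^2 * Real.exp (-(t-μ)^2/(2*σ^2)) - σ^2 * Real.exp (-(t-μ)^2/(2*σ^2))) t := by
    intro t
    have h1 : HasDerivAt (fun t : ℝ => -σ^2 * (t-μ)) (-σ^2) t := by
      simpa using ((hasDerivAt_id t).sub_const μ).const_mul (-σ^2)
    have := h1.mul ((tg_inner_deriv (μ := μ) hσ t).exp)
    refine this.congr_deriv ?_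
    field_simp; ring
  have hint : IntegrableOn (fun x => (x-μ)^2 * Real.exp (-(x-μ)^2/(2*σ^2))
      - σ^2 * Real.exp (-(x-μ)^2/(2*σ^2))) (Set.Ioi a) := by
    exact ((tg_sqint (μ := μ) hσ).sub ((tg_int (μ := μ) hσ).const_mul (σ^2))).integrableOn
  have htt : Tendsto (fun t : ℝ => -σ^2 * (t-μ) * Real.exp (-(t-μ)^2/(2*σ^2))) atTop (nhds 0) := by
    have hb : (0:ℝ) < 1/(2*σ^2) := by positivity
    have h1 : Tendsto (fun s : ℝ => s * Real.exp (-(1/(2*σ^2)) * s^2)) atTop (nhds 0) := by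
      have hlo := exp_neg_mul_sq_isLittleO_exp_neg hb
      have h2 := (Asymptotics.isBigO_refl (fun s : ℝ => s) atTop).mul_isLittleO hlo
      have h3 : Tendsto (fun s : ℝ => s * Real.exp (-s)) atTop (nhds 0) := by
        simpa using Real.tendsto_pow_mul_exp_neg_atTop_nhds_zero 1
      exact h2.trans_tendsto h3
    have h4 := (h1.comp (tendsto_atTop_add_const_right atTop (-μ) tendsto_id)).const_mul (-σ^2)
    have h5 : Tendsto (fun t : ℝ => -σ^2 * ((t + -μ) * Real.exp (-(1/(2*σ^2)) * (t + -μ)^2)))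
        atTop (nhds 0) := by simpa using h4
    refine h5.congr (fun t => ?_)
    rw [show t + -μ = t - μ from by ring, show -(1/(2*σ^2)) * (t-μ)^2 = -(t-μ)^2/(2*σ^2) from by ring]
    ring
  have h := integral_Ioi_of_hasDerivAt_of_tendsto' (a := a) (m := 0)
    (fun t _ => hder t) hint htt
  have hsub : ∫ x in Set.Ioi a, ((x-μ)^2 * Real.exp (-(x-μ)^2/(2*σ^2))
      - σ^2 * Real.exp (-(x-μ)^2/(2*σ^2)))
      = (∫ x in Set.Ioi a, (x-μ)^2 * Real.exp (-(x-μ)^2/(2*σ^2)))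
        - σ^2 * ∫ x in Set.Ioi a, Real.exp (-(x-μ)^2/(2*σ^2)) := by
    rw [MeasureTheory.integral_sub (tg_sqint (μ := μ) hσ).integrableOn
      ((tg_int (μ := μ) hσ).const_mul (σ^2)).integrableOn, MeasureTheory.integral_const_mul]
  rw [hsub] at h
  rw [MeasureTheory.integral_Ici_eq_integral_Ioi, lZ, MeasureTheory.integral_Ici_eq_integral_Ioi]
  rw [show -((a-μ)/σ)^2/2 = -(a-μ)^2/(2*σ^2) from by field_simp [hne]]
  have := h
  nlinarith [this]

end Moments

noncomputable def lam (x : ℝ) : ℝ := Real.exp (-x^2/2) / Q x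

lemma lam_pos (x : ℝ) : 0 < lam x := div_pos (Real.exp_pos _) (Qpos x)

lemma lam_Rm (x : ℝ) : lam x * Rm x = 1 := by
  rw [lam, Rm]
  field_simp [(Qpos x).ne']
  rw [← Real.exp_add, show -(x^2/2) + x^2/2 = 0 by ring, Real.exp_zero]

lemma lam_eq_inv (x : ℝ) : lam x = 1 / Rm x := by
  have := lam_Rm x
  field_simp [(Rpos x).ne']
  linarith [this]

section MeanVar
variable {a μ σ : ℝ}

lemma xint_eq (hσ : 0 < σ) : ∫ x in Set.Ici a, x * Real.exp (-(x-μ)^2/(2*σ^2))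
    = σ^2 * Real.exp (-((a-μ)/σ)^2/2) + μ * (σ * Q ((a-μ)/σ)) := by
  have hsplit : ∫ x in Set.Ici a, x * Real.exp (-(x-μ)^2/(2*σ^2))
      = (∫ x in Set.Ici a, (x-μ) * Real.exp (-(x-μ)^2/(2*σ^2)))
        + μ * ∫ x in Set.Ici a, Real.exp (-(x-μ)^2/(2*σ^2)) := by
    rw [← MeasureTheory.integral_const_mul,
      ← MeasureTheory.integral_add (tg_mint (μ := μ) hσ).integrableOn
        ((tg_int (μ := μ) hσ).const_mul μ).integrableOn]
    refine setIntegral_congr_fun measurableSet_Ici (fun x _ => ?_)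
    show x * Real.exp (-(x-μ)^2/(2*σ^2)) = (x-μ) * Real.exp (-(x-μ)^2/(2*σ^2)) + μ * Real.exp (-(x-μ)^2/(2*σ^2))
    ring
  rw [hsplit, m1 hσ]
  have : ∫ x in Set.Ici a, Real.exp (-(x-μ)^2/(2*σ^2)) = σ * Q ((a-μ)/σ) := by
    rw [← lZ_eq hσ]; rfl
  rw [this]

lemma lMean_eq (hσ : 0 < σ) : lMean a μ σ = μ + σ * lam ((a-μ)/σ) := by
  have hQ := Qpos ((a-μ)/σ)
  rw [lMean]
  have hlz : lZ a μ σ = σ * Q ((a-μ)/σ) := lZ_eq hσ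
  have hx : ∫ x in Set.Ici a, x * Real.exp (-(x - μ)^2/(2*σ^2))
      = σ^2 * Real.exp (-((a-μ)/σ)^2/2) + μ * (σ * Q ((a-μ)/σ)) := xint_eq hσ
  rw [show (∫ x in Set.Ici a, x * Real.exp (-(x - μ) ^ 2 / (2 * σ ^ 2)))
      = σ^2 * Real.exp (-((a-μ)/σ)^2/2) + μ * (σ * Q ((a-μ)/σ)) from hx, hlz, lam]
  field_simp
  ring

lemma lVar_eq (hσ : 0 < σ) :
    lVar a μ σ = σ^2 * (1 + ((a-μ)/σ) * lam ((a-μ)/σ) - (lam ((a-μ)/σ))^2) := by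
  have hne : σ ≠ 0 := hσ.ne'
  set α := (a-μ)/σ with hα
  have hQ := Qpos α
  have haμ : a - μ = σ * α := by rw [hα]; field_simp
  set m := lMean a μ σ with hm
  have hmean : m = μ + σ * lam α := lMean_eq hσ
  have hsplit : ∫ x in Set.Ici a, (x - m)^2 * Real.exp (-(x-μ)^2/(2*σ^2))
      = (∫ x in Set.Ici a, (x-μ)^2 * Real.exp (-(x-μ)^2/(2*σ^2)))
        + (2*(μ-m)) * (∫ x in Set.Ici a, (x-μ) * Real.exp (-(x-μ)^2/(2*σ^2)))
        + ((μ-m)^2) * ∫ x in Set.Ici a, Real.exp (-(x-μ)^2/(2*σ^2)) := by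
    have key : ∫ x in Set.Ici a, (x - m)^2 * Real.exp (-(x-μ)^2/(2*σ^2))
        = ∫ x in Set.Ici a, ((x-μ)^2 * Real.exp (-(x-μ)^2/(2*σ^2))
            + 2*(μ-m)*((x-μ) * Real.exp (-(x-μ)^2/(2*σ^2)))
            + (μ-m)^2 * Real.exp (-(x-μ)^2/(2*σ^2))) :=
      setIntegral_congr_fun measurableSet_Ici (fun x _ => by ring)
    have hfg : Integrable (fun x : ℝ => (x-μ)^2 * Real.exp (-(x-μ)^2/(2*σ^2))
        + 2*(μ-m)*((x-μ) * Real.exp (-(x-μ)^2/(2*σ^2)))) :=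
      (tg_sqint (μ := μ) hσ).add ((tg_mint (μ := μ) hσ).const_mul (2*(μ-m)))
    have hC : Integrable (fun x : ℝ => (μ-m)^2 * Real.exp (-(x-μ)^2/(2*σ^2))) :=
      (tg_int (μ := μ) hσ).const_mul ((μ-m)^2)
    have hB : Integrable (fun x : ℝ => 2*(μ-m)*((x-μ) * Real.exp (-(x-μ)^2/(2*σ^2)))) :=
      (tg_mint (μ := μ) hσ).const_mul (2*(μ-m))
    rw [key, MeasureTheory.integral_add hfg.integrableOn hC.integrableOn,
      MeasureTheory.integral_add ((tg_sqint (μ := μ) hσ).integrableOn) hB.integrableOn,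
      MeasureTheory.integral_const_mul, MeasureTheory.integral_const_mul]
  have hlz : lZ a μ σ = σ * Q α := lZ_eq hσ
  have hE : ∫ x in Set.Ici a, Real.exp (-(x-μ)^2/(2*σ^2)) = σ * Q α := by
    rw [← hlz]; rfl
  rw [lVar, ← hm, hsplit, m2 hσ, m1 hσ, hE, hlz, hmean, lam, haμ]
  have hQne : Q α ≠ 0 := hQ.ne'
  field_simp
  ring
end MeanVar

lemma lam_gt (x : ℝ) : x < lam x := by
  have hR := Rpos x
  have h := xRlt x
  rw [lam_eq_inv, lt_div_iff₀ hR]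
  linarith

lemma upper_strict (a M : ℝ) (hM : a < M) {μ σ : ℝ} (hσ : 0 < σ)
    (hmean : lMean a μ σ = M) : lVar a μ σ < (M - a)^2 := by
  have hne : σ ≠ 0 := hσ.ne'
  set α := (a-μ)/σ with hα
  obtain ⟨hup, huq⟩ := sqrt8_aux α
  set t := lam α with htdef
  have htR := lam_Rm α
  have hR := Rpos α
  have ht : 0 < t := lam_pos α
  have hsam := sampford α
  have h4t : 3*α + Real.sqrt (α^2+8) < 4*t := by
    have h' := mul_lt_mul_of_pos_left hsam ht
    rw [show t * (Rm α*(3*α + Real.sqrt (α^2+8))) = (t * Rm α)*(3*α + Real.sqrt (α^2+8)) from by ring,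
      htR, one_mul] at h'
    linarith
  have hαμ : a - μ = σ * α := by rw [hα]; field_simp
  have hmean' : M = μ + σ * t := by rw [← hmean, lMean_eq hσ]
  have hMa : M - a = σ * (t - α) := by nlinarith [hαμ, hmean']
  have key : 0 < 2*t^2 - 3*α*t + α^2 - 1 := by nlinarith [h4t, hup, huq]
  rw [lVar_eq hσ, show (M-a)^2 = σ^2 * (t-α)^2 from by rw [hMa]; ring]
  nlinarith [key, mul_pos hσ hσ]

lemma lo_tendsto : Tendsto (fun x : ℝ => (x^4+4*x^2-9)/(x^2+3)^2) atTop (nhds 1) := by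
  have h1 : Tendsto (fun x : ℝ => x⁻¹) atTop (nhds 0) := tendsto_inv_atTop_zero
  have hnum : Tendsto (fun x : ℝ => 1 + 4*(x⁻¹)^2 - 9*(x⁻¹)^4) atTop (nhds (1 + 4*0^2 - 9*0^4)) :=
    (tendsto_const_nhds.add ((h1.pow 2).const_mul 4)).sub ((h1.pow 4).const_mul 9)
  have hden : Tendsto (fun x : ℝ => (1 + 3*(x⁻¹)^2)^2) atTop (nhds ((1 + 3*0^2)^2)) :=
    (tendsto_const_nhds.add ((h1.pow 2).const_mul 3)).pow 2
  have hdiv := hnum.div hden (by norm_num)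
  rw [show (1 + 4*(0:ℝ)^2 - 9*0^4) / (1 + 3*(0:ℝ)^2)^2 = 1 by norm_num] at hdiv
  refine hdiv.congr' ?_
  filter_upwards [eventually_gt_atTop (0:ℝ)] with x hx
  have hne : x ≠ 0 := hx.ne'
  rw [Pi.div_apply]
  field_simp


/-- for fixed `a` and `M > a`, the supremum of the variance of left-truncated
Gaussians on `[a, ∞)` with mean `M`, over all parameter pairs `(μ, σ)` with `σ > 0`,
equals `(M − a)²`, and this supremum is not attained. -/
theorem isLUB_lVar_not_attained (a M : ℝ) (hM : a < M) :
    IsLUB {v : ℝ | ∃ μ σ : ℝ, 0 < σ ∧ lMean a μ σ = M ∧ v = lVar a μ σ} ((M - a) ^ 2) ∧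
      (M - a) ^ 2 ∉ {v : ℝ | ∃ μ σ : ℝ, 0 < σ ∧ lMean a μ σ = M ∧ v = lVar a μ σ} := by
  set S := {v : ℝ | ∃ μ σ : ℝ, 0 < σ ∧ lMean a μ σ = M ∧ v = lVar a μ σ} with hS
  have hs : 0 < M - a := by linarith
  have hub : ∀ v ∈ S, v < (M-a)^2 := by
    rintro v ⟨μ, σ, hσ, hmean, rfl⟩
    exact upper_strict a M hM hσ hmean
  -- the approximating family
  have hfam : ∀ x : ℝ, 2 ≤ x →
      ∃ v ∈ S, (M-a)^2 * ((x^4+4*x^2-9)/(x^2+3)^2) ≤ v := by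
    intro x hx
    have hx0 : 0 < x := by linarith
    have ht : x < lam x := lam_gt x
    have hr : 0 < lam x - x := by linarith
    set σx := (M-a)/(lam x - x) with hσxdef
    have hσx : 0 < σx := div_pos hs hr
    set μx := a - σx * x with hμxdef
    have hαx : (a - μx)/σx = x := by
      rw [hμxdef]; field_simp; ring
    have hmean : lMean a μx σx = M := by
      rw [lMean_eq hσx, hαx, hμxdef, hσxdef]
      field_simp
      ring
    refine ⟨lVar a μx σx, ⟨μx, σx, hσx, hmean, rfl⟩, ?_⟩
    rw [lVar_eq hσx, hαx]
    set t := lam x with htdef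
    -- t ≤ L
    have hp : 0 < x^3+5*x := by nlinarith [pow_pos hx0 3, hx0]
    have hD : 0 < x^4+6*x^2+3 := by positivity
    have hc4pos : 0 < c4 x := by rw [c4]; exact div_pos hp hD
    have htL : t ≤ (x^4+6*x^2+3)/(x^3+5*x) := by
      have h1 : 1/Rm x ≤ 1/c4 x := one_div_le_one_div_of_le hc4pos (c4_lt x).le
      have h2 : (1:ℝ)/c4 x = (x^4+6*x^2+3)/(x^3+5*x) := by
        rw [c4, one_div_div]
      rw [htdef, lam_eq_inv]
      linarith [h1, h2]
    set w := (x^2+3)/(x^3+5*x) with hwdef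
    have hw : t - x ≤ w := by
      have : (x^4+6*x^2+3)/(x^3+5*x) = x + w := by
        rw [hwdef]; field_simp; ring
      linarith [htL, this]
    set lo := (x^4+4*x^2-9)/(x^2+3)^2 with hlodef
    have hlo0 : 0 ≤ lo := by
      rw [hlodef]
      apply div_nonneg (by nlinarith) (by positivity)
    have iden : (lo + 1) * w^2 + x*w - 1 = 0 := by
      rw [hlodef, hwdef]
      have h33 : (x^2+3:ℝ) ≠ 0 := by positivity
      field_simp
      ring
    have hq : lo * (t-x)^2 ≤ 1 + x*t - t^2 := by
      nlinarith [iden, hw, hr, hlo0, hx0, mul_nonneg (mul_nonneg hlo0 (by linarith : (0:ℝ) ≤ w - (t-x))) (by linarith : (0:ℝ) ≤ w + (t-x)), mul_nonneg (by linarith : (0:ℝ) ≤ w - (t-x)) (by linarith : (0:ℝ) ≤ w + (t-x))]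
    -- σx^2 = (M-a)^2/(t-x)^2
    have hσsq : σx^2 * (t-x)^2 = (M-a)^2 := by
      rw [hσxdef]; field_simp
    nlinarith [hq, hσsq, sq_nonneg σx, mul_pos hσx hσx, sq_nonneg (t-x), mul_pos (mul_pos hσx hσx) (mul_pos hr hr)]
  constructor
  · constructor
    · intro v hv; exact (hub v hv).le
    · intro b hb
      have hev : ∀ᶠ x : ℝ in atTop, (M-a)^2 * ((x^4+4*x^2-9)/(x^2+3)^2) ≤ b := by
        filter_upwards [eventually_ge_atTop (2:ℝ)] with x hx
        obtain ⟨v, hvS, hvge⟩ := hfam x hx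
        exact le_trans hvge (hb hvS)
      have hlim : Tendsto (fun x : ℝ => (M-a)^2 * ((x^4+4*x^2-9)/(x^2+3)^2)) atTop
          (nhds ((M-a)^2)) := by
        have := lo_tendsto.const_mul ((M-a)^2)
        simpa using this
      exact le_of_tendsto hlim hev
  · intro hmem
    exact absurd (hub _ hmem) (lt_irrefl _)
end

section
/- For every a ∈ ℝ, μ ∈ ℝ and σ > 0, setting r = (μ − a)/σ and ξ(r) = erf(r/√2) + 1, the variance of the left-truncated Gaussian distribution on [a, ∞) with parameters μ, σ equals σ²·(1 − (√(2π)·r·e^{r²/2}·ξ(r) + 2) / (π·e^{r²}·ξ(r)²)). -/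
open MeasureTheory Real Filter Set
open Topology

/- ### Auxiliary lemmas -/

lemma aux_shift_Ioi (f : ℝ → ℝ) (c a : ℝ) :
    ∫ x in Ioi a, f (x - c) = ∫ x in Ioi (a - c), f x := by
  have h := (measurePreserving_add_right (volume : Measure ℝ) (-c)).setIntegral_preimage_emb
    (MeasurableEquiv.addRight (-c)).measurableEmbedding f (Ioi (a - c))
  have hs : (fun x : ℝ => x + -c) ⁻¹' Ioi (a - c) = Ioi a := by
    ext x; simp [sub_eq_add_neg]
  rw [hs] at h
  rw [← h]
  simp [sub_eq_add_neg]

lemma aux_gauss_tail {b : ℝ} (hb : 0 < b) (c : ℝ) :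
    ∫ x in Ioi c, Real.exp (-b * x ^ 2)
      = Real.sqrt (Real.pi / b) / 2 - ∫ x in (0:ℝ)..c, Real.exp (-b * x ^ 2) := by
  have hf : Integrable fun x : ℝ => Real.exp (-b * x ^ 2) := integrable_exp_neg_mul_sq hb
  have h1 : ∀ d : ℝ, (∫ x in Iic d, Real.exp (-b * x ^ 2)) + ∫ x in Ioi d, Real.exp (-b * x ^ 2)
      = ∫ x, Real.exp (-b * x ^ 2) := by
    intro d
    rw [← integral_add_compl (measurableSet_Iic (a := d)) hf, compl_Iic]
  have h2 := intervalIntegral.integral_Iic_sub_Iic hf.integrableOn hf.integrableOn (a := 0) (b := c)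
  have h3 := integral_gaussian_Ioi b
  have e1 := h1 c
  have e2 := h1 0
  linarith

lemma aux_erf_integral (σ c : ℝ) (hσ : 0 < σ) :
    ∫ x in (0:ℝ)..c, Real.exp (-x ^ 2 / (2 * σ ^ 2))
      = σ * Real.sqrt 2 * (Real.sqrt Real.pi / 2) * erf (c / (σ * Real.sqrt 2)) := by
  have hk : σ * Real.sqrt 2 ≠ 0 := by positivity
  have hπ : (0:ℝ) < Real.sqrt Real.pi := Real.sqrt_pos.mpr Real.pi_pos
  have h := intervalIntegral.integral_comp_mul_left
    (a := (0:ℝ)) (b := c / (σ * Real.sqrt 2))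
    (fun x => Real.exp (-x ^ 2 / (2 * σ ^ 2))) hk
  simp only [mul_zero] at h
  rw [mul_div_cancel₀ _ hk] at h
  have h2 : (fun t : ℝ => Real.exp (-(σ * Real.sqrt 2 * t) ^ 2 / (2 * σ ^ 2)))
      = fun t : ℝ => Real.exp (-t ^ 2) := by
    funext t
    congr 1
    have h22 : (σ * Real.sqrt 2 * t) ^ 2 = 2 * σ ^ 2 * t ^ 2 := by
      rw [mul_pow, mul_pow, Real.sq_sqrt (by norm_num : (0:ℝ) ≤ 2)]
      ring
    rw [h22]
    field_simp
  rw [h2] at h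
  rw [eq_comm, smul_eq_mul, inv_mul_eq_iff_eq_mul₀ hk] at h
  rw [h, erf]
  field_simp

lemma erf_neg (x : ℝ) : erf (-x) = - erf x := by
  unfold erf
  have h1 := intervalIntegral.integral_comp_neg (a := (0:ℝ)) (b := x)
    (fun t => Real.exp (-t ^ 2))
  simp only [neg_zero] at h1
  have h2 : (fun t : ℝ => Real.exp (-(-t) ^ 2)) = fun t : ℝ => Real.exp (-t ^ 2) := by
    funext t; rw [neg_sq]
  rw [h2] at h1
  rw [intervalIntegral.integral_symm, ← h1]
  ring

lemma aux_sq_mul_exp_integrable {b : ℝ} (hb : 0 < b) :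
    Integrable fun x : ℝ => x ^ 2 * Real.exp (-b * x ^ 2) := by
  have hmaj : Integrable fun x : ℝ => (2 / b) * Real.exp (-(b/2) * x ^ 2) :=
    (integrable_exp_neg_mul_sq (by linarith)).const_mul _
  refine hmaj.mono' ?_ ?_
  · exact ((measurable_id.pow_const 2).mul
      (((measurable_id.pow_const 2).const_mul (-b)).exp)).aestronglyMeasurable
  · filter_upwards with x
    rw [Real.norm_eq_abs, abs_mul, abs_of_nonneg (sq_nonneg x), abs_of_nonneg (Real.exp_pos _).le]
    set A := Real.exp (-(b/2) * x ^ 2) with hA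
    have hApos : 0 < A := Real.exp_pos _
    have hAA : Real.exp (-b * x ^ 2) = A * A := by
      rw [hA, ← Real.exp_add]; congr 1; ring
    have hE := Real.add_one_le_exp ((b/2) * x ^ 2)
    have hprod : A * Real.exp ((b/2) * x ^ 2) = 1 := by
      rw [hA, ← Real.exp_add]; simp
    have key : x ^ 2 * A ≤ 2 / b := by
      have h3 : ((b/2) * x ^ 2) * A ≤ Real.exp ((b/2) * x ^ 2) * A :=
        mul_le_mul_of_nonneg_right (by linarith) hApos.le
      rw [mul_comm (Real.exp ((b/2) * x ^ 2)) A, hprod] at h3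
      have h4 : x ^ 2 * A = (2 / b) * (b * 2⁻¹ * x ^ 2 * A) := by
        field_simp
      have h3' : b * 2⁻¹ * x ^ 2 * A ≤ 1 := by
        calc b * 2⁻¹ * x ^ 2 * A = b / 2 * x ^ 2 * A := by ring
          _ ≤ 1 := h3
      rw [h4]
      calc (2 / b) * (b * 2⁻¹ * x ^ 2 * A) ≤ (2 / b) * 1 :=
            mul_le_mul_of_nonneg_left h3' (by positivity)
        _ = 2 / b := mul_one _
    calc x ^ 2 * Real.exp (-b * x ^ 2) = (x ^ 2 * A) * A := by rw [hAA]; ring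
      _ ≤ (2 / b) * A := mul_le_mul_of_nonneg_right key hApos.le

lemma aux_tendsto_mul_exp {b : ℝ} (hb : 0 < b) :
    Tendsto (fun y : ℝ => y * Real.exp (-b * y ^ 2)) atTop (𝓝 0) := by
  have h1 : Tendsto (fun u : ℝ => u * Real.exp (-u)) atTop (𝓝 0) := by
    simpa using Real.tendsto_pow_mul_exp_neg_atTop_nhds_zero 1
  have h2 : Tendsto (fun y : ℝ => b * y ^ 2) atTop atTop := by
    apply Tendsto.const_mul_atTop hb
    exact tendsto_pow_atTop (by norm_num)
  have h3 : Tendsto (fun y : ℝ => (b * y ^ 2) * Real.exp (-(b * y ^ 2))) atTop (𝓝 0) :=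
    h1.comp h2
  have h4 : Tendsto (fun y : ℝ => (1/b) * ((b * y ^ 2) * Real.exp (-(b * y ^ 2)))) atTop (𝓝 0) := by
    simpa using h3.const_mul (1/b)
  apply squeeze_zero' (g := fun y : ℝ => (1/b) * ((b * y ^ 2) * Real.exp (-(b * y ^ 2)))) ?_ ?_ h4
  · filter_upwards [eventually_ge_atTop (0:ℝ)] with y hy
    positivity
  · filter_upwards [eventually_ge_atTop (1:ℝ)] with y hy
    have : y ≤ y ^ 2 := by nlinarith
    have e : (1/b) * ((b * y ^ 2) * Real.exp (-(b * y ^ 2)))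
        = y ^ 2 * Real.exp (-b * y ^ 2) := by
      field_simp
    rw [e]
    apply mul_le_mul_of_nonneg_right this (Real.exp_pos _).le


lemma hconv (σ : ℝ) : ∀ y : ℝ, -y ^ 2 / (2 * σ ^ 2) = -((2 * σ ^ 2)⁻¹) * y ^ 2 := by
  intro y; ring

lemma int_E (a μ σ : ℝ) (hσ : 0 < σ) :
    Integrable fun x : ℝ => Real.exp (-(x - μ) ^ 2 / (2 * σ ^ 2)) := by
  have hb : (0:ℝ) < (2 * σ ^ 2)⁻¹ := by positivity
  have h := (integrable_exp_neg_mul_sq hb).comp_sub_right μ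
  refine h.congr ?_
  filter_upwards with x
  rw [hconv]

lemma int_xE (a μ σ : ℝ) (hσ : 0 < σ) :
    Integrable fun x : ℝ => (x - μ) * Real.exp (-(x - μ) ^ 2 / (2 * σ ^ 2)) := by
  have hb : (0:ℝ) < (2 * σ ^ 2)⁻¹ := by positivity
  have h := (integrable_mul_exp_neg_mul_sq hb).comp_sub_right μ
  refine h.congr ?_
  filter_upwards with x
  rw [hconv]

lemma int_x2E (a μ σ : ℝ) (hσ : 0 < σ) :
    Integrable fun x : ℝ => (x - μ) ^ 2 * Real.exp (-(x - μ) ^ 2 / (2 * σ ^ 2)) := by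
  have hb : (0:ℝ) < (2 * σ ^ 2)⁻¹ := by positivity
  have h := (aux_sq_mul_exp_integrable hb).comp_sub_right μ
  refine h.congr ?_
  filter_upwards with x
  rw [hconv]


lemma Z_val (a μ σ : ℝ) (hσ : 0 < σ) :
    (∫ x in Ioi a, Real.exp (-(x - μ) ^ 2 / (2 * σ ^ 2)))
      = σ * (Real.sqrt 2 * Real.sqrt Real.pi / 2) * xi ((μ - a) / σ) := by
  have hb : (0:ℝ) < (2 * σ ^ 2)⁻¹ := by positivity
  have h0 : (∫ x in Ioi a, Real.exp (-(x - μ) ^ 2 / (2 * σ ^ 2)))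
      = ∫ y in Ioi (a - μ), Real.exp (-y ^ 2 / (2 * σ ^ 2)) :=
    aux_shift_Ioi (fun y => Real.exp (-y ^ 2 / (2 * σ ^ 2))) μ a
  have h1 : (∫ y in Ioi (a - μ), Real.exp (-y ^ 2 / (2 * σ ^ 2)))
      = ∫ y in Ioi (a - μ), Real.exp (-((2 * σ ^ 2)⁻¹) * y ^ 2) := by
    congr 1; funext y; congr 1; ring
  have h2 : (∫ x in (0:ℝ)..(a - μ), Real.exp (-((2 * σ ^ 2)⁻¹) * x ^ 2))
      = ∫ x in (0:ℝ)..(a - μ), Real.exp (-x ^ 2 / (2 * σ ^ 2)) := by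
    congr 1; funext x; congr 1; ring
  rw [h0, h1, aux_gauss_tail hb, h2, aux_erf_integral _ _ hσ]
  have h3 : (a - μ) / (σ * Real.sqrt 2) = -(((μ - a) / σ) / Real.sqrt 2) := by
    field_simp
    ring
  rw [h3, erf_neg]
  have h4 : Real.pi / (2 * σ ^ 2)⁻¹ = Real.pi * 2 * σ ^ 2 := by
    field_simp
  rw [h4]
  have h5 : Real.sqrt (Real.pi * 2 * σ ^ 2) = Real.sqrt Real.pi * Real.sqrt 2 * σ := by
    rw [show Real.pi * 2 * σ ^ 2 = (Real.pi * 2) * σ ^ 2 by ring,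
      Real.sqrt_mul (by positivity), Real.sqrt_sq hσ.le,
      Real.sqrt_mul Real.pi_pos.le]
  rw [h5, xi]
  ring


lemma deriv_inner (μ σ x : ℝ) (hσ : 0 < σ) :
    HasDerivAt (fun x : ℝ => -(x - μ) ^ 2 / (2 * σ ^ 2)) (-(2 * (x - μ)) / (2 * σ ^ 2)) x := by
  have h0 : HasDerivAt (fun x : ℝ => (x - μ) ^ 2) (2 * (x - μ)) x := by
    simpa using ((hasDerivAt_id x).sub_const μ).fun_pow 2
  simpa [neg_div] using (h0.neg).div_const (2 * σ ^ 2)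

lemma tendsto_E (μ σ : ℝ) (hσ : 0 < σ) :
    Tendsto (fun x : ℝ => Real.exp (-(x - μ) ^ 2 / (2 * σ ^ 2))) atTop (𝓝 0) := by
  have ta : Tendsto (fun x : ℝ => x - μ) atTop atTop := by
    simpa [sub_eq_add_neg] using tendsto_atTop_add_const_right atTop (-μ) tendsto_id
  have tb : Tendsto (fun x : ℝ => (x - μ) ^ 2) atTop atTop :=
    (tendsto_pow_atTop (by norm_num : 2 ≠ 0)).comp ta
  have tc : Tendsto (fun x : ℝ => (x - μ) ^ 2 / (2 * σ ^ 2)) atTop atTop :=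
    tb.atTop_div_const (by positivity)
  have td : Tendsto (fun x : ℝ => -(x - μ) ^ 2 / (2 * σ ^ 2)) atTop atBot := by
    have := tendsto_neg_atTop_atBot.comp tc
    refine this.congr fun x => ?_
    simp [neg_div]
  exact Real.tendsto_exp_atBot.comp td

lemma tendsto_xE (μ σ : ℝ) (hσ : 0 < σ) :
    Tendsto (fun x : ℝ => (x - μ) * Real.exp (-(x - μ) ^ 2 / (2 * σ ^ 2))) atTop (𝓝 0) := by
  have hb : (0:ℝ) < (2 * σ ^ 2)⁻¹ := by positivity
  have ta : Tendsto (fun x : ℝ => x - μ) atTop atTop := by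
    simpa [sub_eq_add_neg] using tendsto_atTop_add_const_right atTop (-μ) tendsto_id
  have h := (aux_tendsto_mul_exp hb).comp ta
  refine h.congr ?_
  intro x
  simp only [Function.comp_apply]
  congr 2
  ring

lemma int1 (a μ σ : ℝ) (hσ : 0 < σ) :
    ∫ x in Ioi a, (x - μ) * Real.exp (-(x - μ) ^ 2 / (2 * σ ^ 2))
      = σ ^ 2 * Real.exp (-(a - μ) ^ 2 / (2 * σ ^ 2)) := by
  have hderiv : ∀ x ∈ Ici a,
      HasDerivAt (fun x : ℝ => -σ ^ 2 * Real.exp (-(x - μ) ^ 2 / (2 * σ ^ 2)))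
        ((x - μ) * Real.exp (-(x - μ) ^ 2 / (2 * σ ^ 2))) x := by
    intro x _
    have h2 := ((deriv_inner μ σ x hσ).exp).const_mul (-σ ^ 2)
    refine h2.congr_deriv ?_
    have hσ0 : σ ≠ 0 := hσ.ne'
    field_simp
  have hint : IntegrableOn
      (fun x : ℝ => (x - μ) * Real.exp (-(x - μ) ^ 2 / (2 * σ ^ 2))) (Ioi a) :=
    (int_xE a μ σ hσ).integrableOn
  have htend : Tendsto (fun x : ℝ => -σ ^ 2 * Real.exp (-(x - μ) ^ 2 / (2 * σ ^ 2)))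
      atTop (𝓝 0) := by
    simpa using (tendsto_E μ σ hσ).const_mul (-σ ^ 2)
  have h := integral_Ioi_of_hasDerivAt_of_tendsto' hderiv hint htend
  rw [h]
  ring

lemma int2 (a μ σ : ℝ) (hσ : 0 < σ) :
    ∫ x in Ioi a, (x - μ) ^ 2 * Real.exp (-(x - μ) ^ 2 / (2 * σ ^ 2))
      = σ ^ 2 * (∫ x in Ioi a, Real.exp (-(x - μ) ^ 2 / (2 * σ ^ 2)))
        + σ ^ 2 * (a - μ) * Real.exp (-(a - μ) ^ 2 / (2 * σ ^ 2)) := by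
  have hderiv : ∀ x ∈ Ici a,
      HasDerivAt (fun x : ℝ => -σ ^ 2 * ((x - μ) * Real.exp (-(x - μ) ^ 2 / (2 * σ ^ 2))))
        ((x - μ) ^ 2 * Real.exp (-(x - μ) ^ 2 / (2 * σ ^ 2))
          - σ ^ 2 * Real.exp (-(x - μ) ^ 2 / (2 * σ ^ 2))) x := by
    intro x _
    have hp := (((hasDerivAt_id x).sub_const μ).mul ((deriv_inner μ σ x hσ).exp)).const_mul
      (-σ ^ 2)
    refine hp.congr_deriv ?_
    have hσ0 : σ ≠ 0 := hσ.ne'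
    simp only [id]
    field_simp
    ring
  have hint : IntegrableOn
      (fun x : ℝ => (x - μ) ^ 2 * Real.exp (-(x - μ) ^ 2 / (2 * σ ^ 2))
        - σ ^ 2 * Real.exp (-(x - μ) ^ 2 / (2 * σ ^ 2))) (Ioi a) :=
    ((int_x2E a μ σ hσ).sub ((int_E a μ σ hσ).const_mul (σ ^ 2))).integrableOn
  have htend : Tendsto (fun x : ℝ => -σ ^ 2 * ((x - μ) * Real.exp (-(x - μ) ^ 2 / (2 * σ ^ 2))))
      atTop (𝓝 0) := by
    simpa using (tendsto_xE μ σ hσ).const_mul (-σ ^ 2)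
  have h := integral_Ioi_of_hasDerivAt_of_tendsto' hderiv hint htend
  rw [integral_sub (int_x2E a μ σ hσ).integrableOn
    ((int_E a μ σ hσ).const_mul (σ ^ 2)).integrableOn] at h
  rw [integral_const_mul] at h
  have := h
  linarith [this]


lemma Z_pos (a μ σ : ℝ) (hσ : 0 < σ) :
    0 < ∫ x in Ioi a, Real.exp (-(x - μ) ^ 2 / (2 * σ ^ 2)) := by
  rw [setIntegral_pos_iff_support_of_nonneg_ae]
  · have hs : (Function.support fun x : ℝ => Real.exp (-(x - μ) ^ 2 / (2 * σ ^ 2))) = univ := by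
      ext x; simp [Function.support, Real.exp_ne_zero]
    rw [hs, univ_inter, Real.volume_Ioi]
    simp
  · filter_upwards with x using (Real.exp_pos _).le
  · exact (int_E a μ σ hσ).integrableOn


/-- Form I of the variance of a left-truncated Gaussian, with `r = (μ − a)/σ`. -/
theorem lVar_eq_formI (a μ σ r : ℝ) (hσ : 0 < σ) (hr : r = (μ - a) / σ) :
    lVar a μ σ =
      σ ^ 2 * (1 -
        (Real.sqrt (2 * Real.pi) * r * Real.exp (r ^ 2 / 2) * xi r + 2) /
          (Real.pi * Real.exp (r ^ 2) * xi r ^ 2)) := by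
  have hσ' : σ ≠ 0 := ne_of_gt hσ
  set Z : ℝ := ∫ x in Ioi a, Real.exp (-(x - μ) ^ 2 / (2 * σ ^ 2)) with hZdef
  set K : ℝ := Real.exp (-(a - μ) ^ 2 / (2 * σ ^ 2)) with hKdef
  set ξ : ℝ := xi r with hxidef
  set P : ℝ := Real.exp (r ^ 2 / 2) with hPdef
  have hZpos : 0 < Z := Z_pos a μ σ hσ
  have hZne : Z ≠ 0 := ne_of_gt hZpos
  have hZval : Z = σ * (Real.sqrt 2 * Real.sqrt Real.pi / 2) * ξ := by
    rw [hZdef, Z_val a μ σ hσ, hxidef, hr]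
  have hKP : K = P⁻¹ := by
    rw [hKdef, hPdef, ← Real.exp_neg]
    congr 1
    rw [hr]
    field_simp
    ring
  have hPpos : 0 < P := Real.exp_pos _
  have hPne : P ≠ 0 := ne_of_gt hPpos
  have hξpos : 0 < ξ := by
    have hc : 0 < σ * (Real.sqrt 2 * Real.sqrt Real.pi / 2) := by positivity
    by_contra h
    push_neg at h
    have : Z ≤ 0 := by rw [hZval]; exact mul_nonpos_of_nonneg_of_nonpos hc.le h
    linarith
  have hξne : ξ ≠ 0 := ne_of_gt hξpos
  -- lZ over Ici equals Z
  have hlZ : lZ a μ σ = Z := by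
    rw [lZ, integral_Ici_eq_integral_Ioi]
  -- first moment
  have hmom1 : (∫ x in Set.Ici a, x * Real.exp (-(x - μ) ^ 2 / (2 * σ ^ 2)))
      = σ ^ 2 * K + μ * Z := by
    rw [integral_Ici_eq_integral_Ioi]
    have hsplit : ∀ x : ℝ, x * Real.exp (-(x - μ) ^ 2 / (2 * σ ^ 2))
        = (x - μ) * Real.exp (-(x - μ) ^ 2 / (2 * σ ^ 2))
          + μ * Real.exp (-(x - μ) ^ 2 / (2 * σ ^ 2)) := by intro x; ring
    rw [show (fun x : ℝ => x * Real.exp (-(x - μ) ^ 2 / (2 * σ ^ 2)))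
        = fun x : ℝ => (x - μ) * Real.exp (-(x - μ) ^ 2 / (2 * σ ^ 2))
          + μ * Real.exp (-(x - μ) ^ 2 / (2 * σ ^ 2)) from funext hsplit]
    rw [integral_add (int_xE a μ σ hσ).integrableOn
      ((int_E a μ σ hσ).const_mul μ).integrableOn, integral_const_mul, int1 a μ σ hσ]
  have hm : lMean a μ σ = μ + σ ^ 2 * K / Z := by
    rw [lMean, hlZ, hmom1]
    field_simp
    try ring
  -- second moment about the mean
  set m : ℝ := lMean a μ σ with hmdef
  have hvarnum : (∫ x in Set.Ici a, (x - m) ^ 2 * Real.exp (-(x - μ) ^ 2 / (2 * σ ^ 2)))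
      = (σ ^ 2 * Z + σ ^ 2 * (a - μ) * K) + (2 * (μ - m)) * (σ ^ 2 * K) + (μ - m) ^ 2 * Z := by
    rw [integral_Ici_eq_integral_Ioi]
    have hsplit : ∀ x : ℝ, (x - m) ^ 2 * Real.exp (-(x - μ) ^ 2 / (2 * σ ^ 2))
        = (x - μ) ^ 2 * Real.exp (-(x - μ) ^ 2 / (2 * σ ^ 2))
          + ((2 * (μ - m)) * ((x - μ) * Real.exp (-(x - μ) ^ 2 / (2 * σ ^ 2)))
            + (μ - m) ^ 2 * Real.exp (-(x - μ) ^ 2 / (2 * σ ^ 2))) := by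
      intro x; ring
    rw [show (fun x : ℝ => (x - m) ^ 2 * Real.exp (-(x - μ) ^ 2 / (2 * σ ^ 2)))
        = fun x : ℝ => (x - μ) ^ 2 * Real.exp (-(x - μ) ^ 2 / (2 * σ ^ 2))
          + ((2 * (μ - m)) * ((x - μ) * Real.exp (-(x - μ) ^ 2 / (2 * σ ^ 2)))
            + (μ - m) ^ 2 * Real.exp (-(x - μ) ^ 2 / (2 * σ ^ 2))) from funext hsplit]
    have hg : Integrable (fun x : ℝ =>
        (2 * (μ - m)) * ((x - μ) * Real.exp (-(x - μ) ^ 2 / (2 * σ ^ 2)))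
          + (μ - m) ^ 2 * Real.exp (-(x - μ) ^ 2 / (2 * σ ^ 2))) :=
      ((int_xE a μ σ hσ).const_mul _).add ((int_E a μ σ hσ).const_mul _)
    rw [integral_add (int_x2E a μ σ hσ).integrableOn hg.integrableOn,
      integral_add ((int_xE a μ σ hσ).const_mul _).integrableOn
        ((int_E a μ σ hσ).const_mul _).integrableOn,
      integral_const_mul, integral_const_mul, int1 a μ σ hσ, int2 a μ σ hσ]
    rw [hKdef, hZdef]
    ring
  have hμm : μ - m = -(σ ^ 2 * K / Z) := by rw [hm]; ring
  have hvar : lVar a μ σ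
      = ((σ ^ 2 * Z + σ ^ 2 * (a - μ) * K) + (2 * (-(σ ^ 2 * K / Z))) * (σ ^ 2 * K)
          + (-(σ ^ 2 * K / Z)) ^ 2 * Z) / Z := by
    rw [lVar, hlZ, ← hmdef, hvarnum, hμm]
  rw [hvar]
  -- now pure algebra
  have haμ : a - μ = -(r * σ) := by rw [hr]; field_simp; ring
  have hexp2 : Real.exp (r ^ 2) = P ^ 2 := by
    have hP2 : P ^ 2 = Real.exp (r ^ 2 / 2 + r ^ 2 / 2) := by
      rw [Real.exp_add, hPdef, sq]
    rw [hP2]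
    congr 1
    ring
  have hsqrt2pi : Real.sqrt (2 * Real.pi) = Real.sqrt 2 * Real.sqrt Real.pi :=
    Real.sqrt_mul (by norm_num) _
  have hpi : Real.pi = Real.sqrt Real.pi ^ 2 := (Real.sq_sqrt Real.pi_pos.le).symm
  have h2 : Real.sqrt 2 ^ 2 = 2 := Real.sq_sqrt (by norm_num)
  rw [haμ, hKP, hexp2, hsqrt2pi, hZval]
  have h2' : Real.sqrt 2 * Real.sqrt 2 = 2 := Real.mul_self_sqrt (by norm_num)
  have hvpos : 0 < Real.sqrt Real.pi := Real.sqrt_pos.mpr Real.pi_pos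
  have hupos : (0:ℝ) < Real.sqrt 2 := Real.sqrt_pos.mpr (by norm_num)
  field_simp
  ring_nf
  have hv : Real.sqrt Real.pi ^ 2 = Real.pi := Real.sq_sqrt Real.pi_pos.le
  have hu3 : Real.sqrt 2 ^ 3 = 2 * Real.sqrt 2 := by rw [pow_succ, h2]
  have hu4 : Real.sqrt 2 ^ 4 = 4 := by rw [show (4:ℕ) = 2 * 2 from rfl, pow_mul, h2]; norm_num
  have hu5 : Real.sqrt 2 ^ 5 = 4 * Real.sqrt 2 := by rw [pow_succ, hu4]
  have hv3 : Real.sqrt Real.pi ^ 3 = Real.pi * Real.sqrt Real.pi := by rw [pow_succ, hv]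
  have hv4 : Real.sqrt Real.pi ^ 4 = Real.pi ^ 2 := by rw [show (4:ℕ) = 2 * 2 from rfl, pow_mul, hv]
  have hv5 : Real.sqrt Real.pi ^ 5 = Real.pi ^ 2 * Real.sqrt Real.pi := by rw [pow_succ, hv4]
  simp only [h2, hu3, hu4, hu5, hv, hv3, hv4, hv5]
  ring
end

section
/- Fix a ∈ ℝ, M > a, r ∈ ℝ, and let ξ(r) = erf(r/√2) + 1, σ(M,r) = (M − a)·e^{r²/2}·ξ(r) / (r·e^{r²/2}·ξ(r) + √(2/π)), μ = r·σ(M,r) + a. Then the variance of the left-truncated Gaussian distribution on [a, ∞) with parameters μ, σ(M,r) equals (M − a)²·(π·e^{r²}·ξ(r)² − √(2π)·r·e^{r²/2}·ξ(r) − 2) / (π·(r·e^{r²/2}·ξ(r) + √(2/π))²). -/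
open MeasureTheory Real Filter Set Topology

section Helpers

lemma hg_int : Integrable (fun t : ℝ => Real.exp (-t ^ 2 / 2)) := by
  have h : (fun t : ℝ => Real.exp (-t ^ 2 / 2)) = fun t : ℝ => Real.exp (-(1/2 : ℝ) * t ^ 2) := by
    funext t; congr 1; ring
  rw [h]; exact integrable_exp_neg_mul_sq (by norm_num)

lemma hg1_int : Integrable (fun t : ℝ => t * Real.exp (-t ^ 2 / 2)) := by
  have h : (fun t : ℝ => t * Real.exp (-t ^ 2 / 2))
      = fun t : ℝ => t * Real.exp (-(1/2 : ℝ) * t ^ 2) := by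
    funext t; congr 2; ring
  rw [h]; exact integrable_mul_exp_neg_mul_sq (by norm_num)

lemma hg2_int : Integrable (fun t : ℝ => t ^ 2 * Real.exp (-t ^ 2 / 2)) := by
  have h := integrable_rpow_mul_exp_neg_mul_sq (b := 1/2) (by norm_num) (s := 2) (by norm_num)
  have h2 : (fun t : ℝ => t ^ 2 * Real.exp (-t ^ 2 / 2))
      = fun t : ℝ => t ^ (2:ℝ) * Real.exp (-(1/2 : ℝ) * t ^ 2) := by
    funext t
    rw [Real.rpow_two]
    congr 2; ring
  rw [h2]; exact h

lemma tendsto_exp_sq : Tendsto (fun t : ℝ => Real.exp (-t ^ 2 / 2)) atTop (𝓝 0) := by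
  have h1 : Tendsto (fun t : ℝ => t ^ 2 / 2) atTop atTop :=
    (tendsto_pow_atTop two_ne_zero).atTop_div_const (by norm_num)
  have := (Real.tendsto_exp_neg_atTop_nhds_zero).comp h1
  simpa [Function.comp_def, neg_div] using this

lemma tendsto_mul_exp_sq : Tendsto (fun t : ℝ => t * Real.exp (-t ^ 2 / 2)) atTop (𝓝 0) := by
  have h := rpow_mul_exp_neg_mul_sq_isLittleO_exp_neg (b := 1/2) (by norm_num) 1
  have h2 : Tendsto (fun x : ℝ => Real.exp (-(1/2) * x)) atTop (𝓝 0) := by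
    have h3 : Tendsto (fun x : ℝ => (1/2 : ℝ) * x) atTop atTop :=
      Tendsto.const_mul_atTop (by norm_num) tendsto_id
    have := (Real.tendsto_exp_neg_atTop_nhds_zero).comp h3
    simpa [Function.comp_def] using this
  have := h.isBigO.trans_tendsto h2
  have he : (fun x : ℝ => x ^ (1:ℝ) * Real.exp (-(1/2) * x ^ 2))
      = fun t : ℝ => t * Real.exp (-t ^ 2 / 2) := by
    funext t; rw [Real.rpow_one]; congr 1; ring
  rwa [he] at this

lemma K_val (c : ℝ) : ∫ t in Ioi c, t * Real.exp (-t ^ 2 / 2) = Real.exp (-c ^ 2 / 2) := by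
  have hderiv : ∀ x ∈ Ici c, HasDerivAt (fun t : ℝ => -Real.exp (-t ^ 2 / 2))
      (x * Real.exp (-x ^ 2 / 2)) x := by
    intro x _
    have h1 : HasDerivAt (fun t : ℝ => -t ^ 2 / 2) (-x) x := by
      have := ((hasDerivAt_pow 2 x).neg).div_const 2
      refine this.congr_deriv ?_
      simp; ring
    have := (h1.exp).neg
    refine this.congr_deriv ?_
    ring
  have := integral_Ioi_of_hasDerivAt_of_tendsto' hderiv hg1_int.integrableOn
    (tendsto_exp_sq.neg)
  rw [this]; ring

lemma L_val (c : ℝ) : ∫ t in Ioi c, t ^ 2 * Real.exp (-t ^ 2 / 2)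
    = c * Real.exp (-c ^ 2 / 2) + ∫ t in Ioi c, Real.exp (-t ^ 2 / 2) := by
  have hderiv : ∀ x ∈ Ici c, HasDerivAt (fun t : ℝ => -(t * Real.exp (-t ^ 2 / 2)))
      (x ^ 2 * Real.exp (-x ^ 2 / 2) - Real.exp (-x ^ 2 / 2)) x := by
    intro x _
    have h1 : HasDerivAt (fun t : ℝ => -t ^ 2 / 2) (-x) x := by
      have := ((hasDerivAt_pow 2 x).neg).div_const 2
      refine this.congr_deriv ?_
      simp; ring
    have h2 := ((hasDerivAt_id x).mul h1.exp).neg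
    refine h2.congr_deriv ?_
    simp only [id]
    ring
  have hint : IntegrableOn (fun x : ℝ => x ^ 2 * Real.exp (-x ^ 2 / 2) - Real.exp (-x ^ 2 / 2))
      (Ioi c) := (hg2_int.sub hg_int).integrableOn
  have htend : Tendsto (fun t : ℝ => -(t * Real.exp (-t ^ 2 / 2))) atTop (𝓝 0) := by
    simpa using tendsto_mul_exp_sq.neg
  have := integral_Ioi_of_hasDerivAt_of_tendsto' hderiv hint htend
  have hsub : ∫ x in Ioi c, (x ^ 2 * Real.exp (-x ^ 2 / 2) - Real.exp (-x ^ 2 / 2))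
      = (∫ x in Ioi c, x ^ 2 * Real.exp (-x ^ 2 / 2)) - ∫ x in Ioi c, Real.exp (-x ^ 2 / 2) :=
    integral_sub hg2_int.integrableOn hg_int.integrableOn
  rw [hsub] at this
  have : (∫ x in Ioi c, x ^ 2 * Real.exp (-x ^ 2 / 2)) - ∫ x in Ioi c, Real.exp (-x ^ 2 / 2)
      = c * Real.exp (-c ^ 2 / 2) := by rw [this]; ring
  linarith [this]

lemma G_zero : ∫ t in Ioi (0:ℝ), Real.exp (-t ^ 2 / 2) = Real.sqrt (π / 2) := by
  have h : (fun t : ℝ => Real.exp (-t ^ 2 / 2)) = fun t : ℝ => Real.exp (-(1/2 : ℝ) * t ^ 2) := by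
    funext t; congr 1; ring
  rw [h, integral_gaussian_Ioi]
  have h2 : Real.sqrt (π / (1/2)) = 2 * Real.sqrt (π / 2) := by
    rw [show π / (1/2 : ℝ) = 2 ^ 2 * (π / 2) by ring,
      Real.sqrt_mul (by positivity), Real.sqrt_sq (by norm_num : (0:ℝ) ≤ 2)]
  rw [h2]; ring

lemma G_split (c : ℝ) : ∫ t in Ioi c, Real.exp (-t ^ 2 / 2)
    = Real.sqrt (π / 2) - ∫ t in (0:ℝ)..c, Real.exp (-t ^ 2 / 2) := by
  have h1 := intervalIntegral.integral_Iic_sub_Iic (f := fun t : ℝ => Real.exp (-t ^ 2 / 2))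
    (μ := volume) hg_int.integrableOn hg_int.integrableOn (a := 0) (b := c)
  have h2 : ∀ d : ℝ, (∫ t in Iic d, Real.exp (-t ^ 2 / 2)) + ∫ t in Ioi d, Real.exp (-t ^ 2 / 2)
      = ∫ t : ℝ, Real.exp (-t ^ 2 / 2) := by
    intro d
    have := integral_add_compl (measurableSet_Iic (a := d)) hg_int
      (μ := (volume : Measure ℝ))
    rwa [compl_Iic] at this
  have := h2 c
  have h0 := h2 0
  rw [← G_zero]
  linarith [h1, this, h0]

lemma G_neg (r : ℝ) : ∫ t in Ioi (-r), Real.exp (-t ^ 2 / 2) = Real.sqrt (π / 2) * xi r := by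
  rw [G_split]
  have hs2 : Real.sqrt 2 ≠ 0 := by positivity
  have hsub : ∫ t in (0:ℝ)..(-r), Real.exp (-t ^ 2 / 2)
      = Real.sqrt 2 * ∫ u in (0:ℝ)..(-r / Real.sqrt 2), Real.exp (-u ^ 2) := by
    have hcomp : (fun t : ℝ => Real.exp (-t ^ 2 / 2))
        = fun t : ℝ => (fun u : ℝ => Real.exp (-u ^ 2)) (t / Real.sqrt 2) := by
      funext t
      simp only [div_pow, Real.sq_sqrt (by norm_num : (0:ℝ) ≤ 2)]
      congr 1; ring
    rw [hcomp, intervalIntegral.integral_comp_div (f := fun u : ℝ => Real.exp (-u ^ 2)) hs2]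
    simp [smul_eq_mul]
  have hneg : ∫ u in (0:ℝ)..(-r / Real.sqrt 2), Real.exp (-u ^ 2)
      = -∫ u in (0:ℝ)..(r / Real.sqrt 2), Real.exp (-u ^ 2) := by
    have h1 : ∫ u in (0:ℝ)..(r / Real.sqrt 2), Real.exp (-u ^ 2)
        = ∫ u in (-(r / Real.sqrt 2))..(0:ℝ), Real.exp (-u ^ 2) := by
      have := intervalIntegral.integral_comp_neg (a := (0:ℝ)) (b := r / Real.sqrt 2)
        (fun x : ℝ => Real.exp (-x ^ 2))
      simpa [neg_sq] using this
    rw [show -r / Real.sqrt 2 = -(r / Real.sqrt 2) by ring,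
      intervalIntegral.integral_symm, h1]
  rw [hsub, hneg, xi, erf]
  have hπ : Real.sqrt π ≠ 0 := by positivity
  have hS : Real.sqrt 2 * Real.sqrt 2 = 2 := Real.mul_self_sqrt (by norm_num)
  have h2 : Real.sqrt (π / 2) = Real.sqrt π / Real.sqrt 2 :=
    Real.sqrt_div pi_pos.le 2
  rw [h2]
  set I := ∫ u in (0:ℝ)..(r / Real.sqrt 2), Real.exp (-u ^ 2)
  field_simp
  linear_combination I * hS

lemma G_pos (c : ℝ) : 0 < ∫ t in Ioi c, Real.exp (-t ^ 2 / 2) := by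
  rw [setIntegral_pos_iff_support_of_nonneg_ae]
  · have : (Function.support fun t : ℝ => Real.exp (-t ^ 2 / 2)) = univ := by
      ext t; simp [Function.support, (Real.exp_pos _).ne']
    rw [this, univ_inter, Real.volume_Ioi]
    simp
  · filter_upwards with t using (Real.exp_pos _).le
  · exact hg_int.integrableOn

lemma xi_pos (r : ℝ) : 0 < xi r := by
  have h := G_pos (-r)
  rw [G_neg] at h
  have hs : 0 < Real.sqrt (π / 2) := Real.sqrt_pos.mpr (by positivity)
  rcases mul_pos_iff.mp h with ⟨_, h2⟩ | ⟨h2, _⟩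
  · exact h2
  · linarith

lemma mills (c : ℝ) (hc : 0 < c) :
    (∫ t in Ioi c, Real.exp (-t ^ 2 / 2)) ≤ Real.exp (-c ^ 2 / 2) / c := by
  have h1 : (∫ t in Ioi c, Real.exp (-t ^ 2 / 2))
      ≤ ∫ t in Ioi c, (t / c) * Real.exp (-t ^ 2 / 2) := by
    apply setIntegral_mono_on hg_int.integrableOn
    · have : (fun t : ℝ => (t / c) * Real.exp (-t ^ 2 / 2))
          = fun t : ℝ => (1 / c) * (t * Real.exp (-t ^ 2 / 2)) := by
        funext t; ring
      rw [this]
      exact (hg1_int.const_mul _).integrableOn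
    · exact measurableSet_Ioi
    · intro t ht
      have h2 : 1 ≤ t / c := (one_le_div hc).mpr (le_of_lt ht)
      nlinarith [Real.exp_pos (-t ^ 2 / 2)]
  have h2 : ∫ t in Ioi c, (t / c) * Real.exp (-t ^ 2 / 2)
      = (1 / c) * ∫ t in Ioi c, t * Real.exp (-t ^ 2 / 2) := by
    rw [← integral_const_mul]
    congr 1; funext t; ring
  rw [h2, K_val] at h1
  have h3 : 1 / c * Real.exp (-c ^ 2 / 2) = Real.exp (-c ^ 2 / 2) / c := by ring
  linarith [h1]

lemma shift_Ioi_s6 (f : ℝ → ℝ) (a c : ℝ) :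
    ∫ x in Ioi a, f (x + c) = ∫ x in Ioi (a + c), f x := by
  rw [← integral_indicator (measurableSet_Ioi (a := a)),
    ← integral_indicator (measurableSet_Ioi (a := a + c))]
  rw [← integral_add_right_eq_self (fun x => Set.indicator (Ioi (a + c)) f x) c]
  congr 1
  funext x
  by_cases h : a < x
  · rw [indicator_of_mem (mem_Ioi.mpr h), indicator_of_mem (by simpa using h)]
  · rw [indicator_of_notMem (by simpa using h), indicator_of_notMem (by simpa using h)]

lemma subst_Ici (f : ℝ → ℝ) (a μ s : ℝ) (hs : 0 < s) :
    ∫ x in Ici a, f x = s * ∫ t in Ioi ((a - μ) / s), f (s * t + μ) := by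
  rw [MeasureTheory.integral_Ici_eq_integral_Ioi]
  have h1 : ∫ t in Ioi ((a - μ) / s), f (s * t + μ)
      = ∫ t in Ioi ((a - μ) / s), (fun y => f (y + μ)) (s * t) := rfl
  rw [h1, integral_comp_mul_left_Ioi (fun y => f (y + μ)) _ hs,
    mul_div_cancel₀ _ hs.ne', shift_Ioi_s6, sub_add_cancel, smul_eq_mul]
  field_simp

lemma int_eq (f : ℝ → ℝ) (a r s : ℝ) (hs : 0 < s) :
    ∫ x in Ici a, f x * Real.exp (-(x - (r * s + a)) ^ 2 / (2 * s ^ 2))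
      = s * ∫ t in Ioi (-r), f (s * t + (r * s + a)) * Real.exp (-t ^ 2 / 2) := by
  rw [subst_Ici (fun x => f x * Real.exp (-(x - (r * s + a)) ^ 2 / (2 * s ^ 2)))
    a (r * s + a) s hs, show (a - (r * s + a)) / s = -r by field_simp; ring]
  congr 1
  refine setIntegral_congr_fun measurableSet_Ioi (fun t _ => ?_)
  congr 2
  rw [show s * t + (r * s + a) - (r * s + a) = s * t by ring, mul_pow]
  field_simp

end Helpers

/-- The spread parameter `σ(M,r)` for which the left-truncated Gaussian on `[a, ∞)`
with `μ = r·σ + a` has mean `M`. -/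
noncomputable def sigmaMr (a M r : ℝ) : ℝ :=
  (M - a) * Real.exp (r ^ 2 / 2) * xi r /
    (r * Real.exp (r ^ 2 / 2) * xi r + Real.sqrt (2 / Real.pi))

/-- Form II of the variance of a left-truncated Gaussian on `[a, ∞)` with mean `M` and
normalized location parameter `r`. -/
noncomputable def varII (a M r : ℝ) : ℝ :=
  (M - a) ^ 2 *
      (Real.pi * Real.exp (r ^ 2) * xi r ^ 2 -
        Real.sqrt (2 * Real.pi) * r * Real.exp (r ^ 2 / 2) * xi r - 2) /
    (Real.pi * (r * Real.exp (r ^ 2 / 2) * xi r + Real.sqrt (2 / Real.pi)) ^ 2)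

/-- Form II of the variance: with `σ = σ(M,r)` and `μ = r·σ(M,r) + a`, the
variance of the left-truncated Gaussian on `[a, ∞)` equals the explicit formula `varII a M r`. -/
theorem lVar_eq_formII (a M r : ℝ) (hM : a < M) :
    lVar a (r * sigmaMr a M r + a) (sigmaMr a M r) = varII a M r := by
  have hξ := xi_pos r
  have hW : (0:ℝ) < Real.exp (r ^ 2 / 2) := Real.exp_pos _
  have hE : (0:ℝ) < Real.exp (-r ^ 2 / 2) := Real.exp_pos _
  set W := Real.exp (r ^ 2 / 2) with hWdef
  set E := Real.exp (-r ^ 2 / 2) with hEdef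
  have hWE : W * E = 1 := by
    rw [hWdef, hEdef, ← Real.exp_add, show r ^ 2 / 2 + -r ^ 2 / 2 = 0 by ring, Real.exp_zero]
  set q := Real.sqrt 2 with hqdef
  set p := Real.sqrt π with hpdef
  have hq : 0 < q := Real.sqrt_pos.mpr (by norm_num)
  have hp : 0 < p := Real.sqrt_pos.mpr pi_pos
  have hq2 : q ^ 2 = 2 := Real.sq_sqrt (by norm_num)
  have hp2 : p ^ 2 = π := Real.sq_sqrt pi_pos.le
  have hsqrtpi2 : Real.sqrt (π / 2) = p / q := Real.sqrt_div pi_pos.le 2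
  have hsqrt2pi : Real.sqrt (2 / π) = q / p := Real.sqrt_div (by norm_num) π
  set D := r * W * xi r + Real.sqrt (2 / π) with hDdef
  have hD0 : 0 ≤ D := by
    rcases le_or_gt 0 r with hr | hr
    · exact add_nonneg (mul_nonneg (mul_nonneg hr hW.le) hξ.le) (Real.sqrt_nonneg _)
    · have hc : 0 < -r := by linarith
      have hm := mills (-r) hc
      rw [G_neg r] at hm
      rw [neg_sq] at hm
      have hm2 : Real.sqrt (π / 2) * xi r * (-r) ≤ E := (le_div_iff₀ hc).mp hm
      have hm3 := mul_le_mul_of_nonneg_left hm2 hW.le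
      have hPQ : Real.sqrt (2 / π) * Real.sqrt (π / 2) = 1 := by
        rw [hsqrtpi2, hsqrt2pi]
        field_simp
      rw [hDdef]
      nlinarith [hm3, hWE, hPQ, Real.sqrt_nonneg (2 / π), Real.sqrt_pos.mpr (show (0:ℝ) < π/2 by positivity)]
  rcases hD0.eq_or_lt.imp_left Eq.symm with hDz | hD
  ·
    have hS0 : sigmaMr a M r = 0 := by
      rw [sigmaMr, ← hDdef, hDz, div_zero]
    rw [hS0]
    have hvar : varII a M r = 0 := by
      rw [varII, ← hDdef, hDz]
      norm_num
    rw [hvar]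
    have hZ0 : lZ a (r * 0 + a) 0 = 0 := by
      rw [lZ]
      have h1 : ∀ x : ℝ, Real.exp (-(x - (r * 0 + a)) ^ 2 / (2 * 0 ^ 2)) = 1 := by
        intro x; norm_num
      simp only [h1]
      apply integral_undef
      intro h
      have h' : IntegrableOn (fun _ : ℝ => (1:ℝ)) (Ici a) volume := h
      rcases (integrableOn_const_iff (C := (1:ℝ))).mp h' with h2 | h2
      · norm_num at h2
      · rw [Real.volume_Ici] at h2
        exact absurd h2 (by simp)
    rw [lVar, hZ0, div_zero]
  · -- main case: D > 0
    set S := sigmaMr a M r with hSdef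
    have hSval : S = (M - a) * W * xi r / D := by
      rw [hSdef, sigmaMr, ← hWdef, ← hDdef]
    have hSpos : 0 < S := by
      rw [hSval]
      exact div_pos (mul_pos (mul_pos (sub_pos.mpr hM) hW) hξ) hD
    have hZ : lZ a (r * S + a) S = S * (Real.sqrt (π / 2) * xi r) := by
      rw [lZ]
      have h0 := int_eq (fun _ => (1:ℝ)) a r S hSpos
      simp only [one_mul] at h0
      rw [h0, G_neg]
    have hN1 : (∫ x in Ici a, x * Real.exp (-(x - (r * S + a)) ^ 2 / (2 * S ^ 2)))
        = S * (S * E + (r * S + a) * (Real.sqrt (π / 2) * xi r)) := by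
      have h0 := int_eq (fun x => x) a r S hSpos
      rw [h0]
      have hlin : ∫ t in Ioi (-r), (S * t + (r * S + a)) * Real.exp (-t ^ 2 / 2)
          = ∫ t in Ioi (-r), (S * (t * Real.exp (-t ^ 2 / 2))
              + (r * S + a) * Real.exp (-t ^ 2 / 2)) := by
        refine setIntegral_congr_fun measurableSet_Ioi (fun t _ => ?_)
        ring
      rw [hlin, integral_add ((hg1_int.const_mul S).integrableOn)
          ((hg_int.const_mul (r * S + a)).integrableOn),
        integral_const_mul, integral_const_mul, K_val, G_neg, neg_sq, ← hEdef]
    set Gv := Real.sqrt (π / 2) * xi r with hGvdef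
    have hGv : 0 < Gv := mul_pos (Real.sqrt_pos.mpr (by positivity)) hξ
    have hMean : lMean a (r * S + a) S = (r * S + a) + S * E / Gv := by
      rw [lMean, hN1, hZ]
      field_simp [hSpos.ne', hGv.ne']
      ring
    set mm := (r * S + a) + S * E / Gv with hmmdef
    have hN2 : (∫ x in Ici a, (x - mm) ^ 2 * Real.exp (-(x - (r * S + a)) ^ 2 / (2 * S ^ 2)))
        = S * (S ^ 2 * (Gv - r * E) + 2 * S * ((r * S + a) - mm) * E
            + ((r * S + a) - mm) ^ 2 * Gv) := by
      have h0 := int_eq (fun x => (x - mm) ^ 2) a r S hSpos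
      rw [h0]
      have hlin : ∫ t in Ioi (-r), (S * t + (r * S + a) - mm) ^ 2 * Real.exp (-t ^ 2 / 2)
          = ∫ t in Ioi (-r), ((S ^ 2 * (t ^ 2 * Real.exp (-t ^ 2 / 2))
              + (2 * S * ((r * S + a) - mm)) * (t * Real.exp (-t ^ 2 / 2)))
              + ((r * S + a) - mm) ^ 2 * Real.exp (-t ^ 2 / 2)) := by
        refine setIntegral_congr_fun measurableSet_Ioi (fun t _ => ?_)
        ring
      have hi12 : Integrable (fun t : ℝ => S ^ 2 * (t ^ 2 * Real.exp (-t ^ 2 / 2))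
          + 2 * S * ((r * S + a) - mm) * (t * Real.exp (-t ^ 2 / 2))) :=
        (hg2_int.const_mul _).add (hg1_int.const_mul _)
      rw [hlin, integral_add hi12.integrableOn ((hg_int.const_mul _).integrableOn),
        integral_add ((hg2_int.const_mul _).integrableOn) ((hg1_int.const_mul _).integrableOn),
        integral_const_mul, integral_const_mul, integral_const_mul,
        L_val, K_val, G_neg, neg_sq, ← hEdef, ← hGvdef]
      ring
    rw [lVar, hMean, hN2, hZ]
    clear_value S Gv W E q p D
    have hW2 : Real.exp (r ^ 2) = W * W := by
      rw [hWdef, ← Real.exp_add]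
      congr 1
      ring
    have hs2pi : Real.sqrt (2 * π) = q * p := by
      rw [hqdef, hpdef, ← Real.sqrt_mul (by norm_num : (0:ℝ) ≤ 2)]
    have hx : xi r ≠ 0 := hξ.ne'
    have hMa : M - a ≠ 0 := sub_ne_zero.mpr hM.ne'
    have stepA : S * (S ^ 2 * (Gv - r * E) + 2 * S * (r * S + a - mm) * E
          + (r * S + a - mm) ^ 2 * Gv) / (S * Gv)
        = S ^ 2 * (Gv ^ 2 - r * E * Gv - E ^ 2) / Gv ^ 2 := by
      rw [hmmdef]
      field_simp [hSpos.ne', hGv.ne']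
      ring
    rw [stepA, varII, ← hWdef, hW2, hs2pi, ← hDdef, hSval, hGvdef, hsqrtpi2, ← hp2]
    field_simp [hD.ne', hp.ne', hq.ne', hx, hMa, hW.ne', hE.ne']
    linear_combination ((M - a) ^ 2 * p ^ 2 * q ^ 3 * xi r ^ 2 * D ^ 2 *
        (-(r * p * xi r * q * W) - q ^ 2 * (W * E + 1))) * hWE
      - (M - a) ^ 2 * p ^ 2 * q ^ 3 * xi r ^ 2 * D ^ 2 * hq2
      + (-(W * xi r * p * q * r) + W * xi r ^ 3 * p ^ 3 * q ^ 4 * r * D ^ 2 * (M - a) ^ 2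
        + (xi r ^ 2 * p ^ 2 * q ^ 3 * D ^ 2 * (M - a) ^ 2 - 1) * q ^ 2 * (W * E + 1)) * hWE
      + (xi r ^ 2 * p ^ 2 * q ^ 3 * D ^ 2 * (M - a) ^ 2 - 1) * hq2
end

section
/- Fix a ∈ ℝ and M > a, and let ξ(r) = erf(r/√2) + 1, σ(M,r) = (M − a)·e^{r²/2}·ξ(r) / (r·e^{r²/2}·ξ(r) + √(2/π)). Then for every r ∈ ℝ, the derivative of σ(M,·) at r equals −Var(M,r)/(M − a), where Var(M,r) = (M − a)²·(π·e^{r²}·ξ(r)² − √(2π)·r·e^{r²/2}·ξ(r) − 2) / (π·(r·e^{r²/2}·ξ(r) + √(2/π))²). -/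
open MeasureTheory Real Filter Set

lemma hasDerivAt_erf (x : ℝ) :
    HasDerivAt erf (2 / Real.sqrt Real.pi * Real.exp (-x ^ 2)) x := by
  have h : HasDerivAt (fun y : ℝ => ∫ t in (0:ℝ)..y, Real.exp (-t ^ 2))
      (Real.exp (-x ^ 2)) x := by
    apply intervalIntegral.integral_hasDerivAt_right
    · exact (Continuous.intervalIntegrable (by continuity) _ _)
    · exact (Continuous.stronglyMeasurableAtFilter (by continuity) _ _)
    · exact (Continuous.continuousAt (by continuity))
  exact h.const_mul _

lemma hasDerivAt_xi (r : ℝ) :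
    HasDerivAt xi (Real.sqrt (2 / Real.pi) * Real.exp (-(r ^ 2) / 2)) r := by
  have h1 : HasDerivAt (fun y : ℝ => y / Real.sqrt 2) (1 / Real.sqrt 2) r := by
    simpa using (hasDerivAt_id r).div_const (Real.sqrt 2)
  have h2 := (hasDerivAt_erf (r / Real.sqrt 2)).comp r h1
  have h3 : HasDerivAt xi
      (2 / Real.sqrt Real.pi * Real.exp (-(r / Real.sqrt 2) ^ 2) * (1 / Real.sqrt 2)) r :=
    h2.add_const 1
  convert h3 using 1
  have h2' : (0:ℝ) < 2 := by norm_num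
  have hs2 : Real.sqrt 2 ^ 2 = 2 := Real.sq_sqrt h2'.le
  have hx : (r / Real.sqrt 2) ^ 2 = r ^ 2 / 2 := by
    rw [div_pow, hs2]
  rw [hx, Real.sqrt_div (by norm_num : (0:ℝ) ≤ 2)]
  have hne : Real.sqrt 2 ≠ 0 := by positivity
  have hpne : Real.sqrt Real.pi ≠ 0 := by positivity
  field_simp
  linear_combination hs2

lemma tendsto_exp_neg_sq : Tendsto (fun t : ℝ => Real.exp (-t ^ 2)) atTop (nhds 0) := by
  apply Real.tendsto_exp_atBot.comp
  apply tendsto_neg_atBot_iff.mpr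
  exact tendsto_pow_atTop (by norm_num)

lemma hasDerivAt_negexp (t : ℝ) :
    HasDerivAt (fun t : ℝ => -Real.exp (-t ^ 2) / 2) (t * Real.exp (-t ^ 2)) t := by
  have h : HasDerivAt (fun t : ℝ => -t ^ 2) (-(2 * t)) t := by
    exact (hasDerivAt_pow 2 t).neg.congr_deriv (by norm_num)
  have := (h.exp).neg.div_const 2
  exact this.congr_deriv (by ring)

lemma integrableOn_exp_neg_sq (s : ℝ) :
    IntegrableOn (fun t : ℝ => Real.exp (-t ^ 2)) (Ioi s) := by
  have := integrable_exp_neg_mul_sq (by norm_num : (0:ℝ) < 1)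
  simpa using this.integrableOn

lemma integrableOn_id_exp_neg_sq (s : ℝ) (hs : 0 < s) :
    IntegrableOn (fun t : ℝ => t * Real.exp (-t ^ 2)) (Ioi s) := by
  apply integrableOn_Ioi_deriv_of_nonneg (g := fun t : ℝ => -Real.exp (-t ^ 2) / 2)
  · exact ((Continuous.div_const (by continuity) 2).continuousWithinAt)
  · exact fun x _ => hasDerivAt_negexp x
  · intro x hx
    have : (0:ℝ) < x := hs.trans hx
    positivity
  · have := tendsto_exp_neg_sq.neg.div_const 2
    simpa using this

lemma integral_id_exp_neg_sq (s : ℝ) (hs : 0 < s) :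
    ∫ t in Ioi s, t * Real.exp (-t ^ 2) = Real.exp (-s ^ 2) / 2 := by
  have h := integral_Ioi_of_hasDerivAt_of_nonneg (a := s)
    (g := fun t : ℝ => -Real.exp (-t ^ 2) / 2) (g' := fun t => t * Real.exp (-t ^ 2))
    ((Continuous.div_const (by continuity) 2).continuousWithinAt)
    (fun x _ => hasDerivAt_negexp x)
    (fun x hx => by have : (0:ℝ) < x := hs.trans hx; positivity)
    (by simpa using tendsto_exp_neg_sq.neg.div_const 2)
  rw [h]; ring

lemma gauss_tail (s : ℝ) (hs : 0 < s) :
    s * ∫ t in Ioi s, Real.exp (-t ^ 2) < Real.exp (-s ^ 2) / 2 := by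
  have hint1 := integrableOn_id_exp_neg_sq s hs
  have hint2 := (integrableOn_exp_neg_sq s).const_mul s
  have key : 0 < ∫ t in Ioi s, (t - s) * Real.exp (-t ^ 2) := by
    rw [setIntegral_pos_iff_support_of_nonneg_ae]
    · have hsub : Ioi s ⊆ (Function.support fun t => (t - s) * Real.exp (-t ^ 2)) ∩ Ioi s := by
        intro x hx
        have hx' : s < x := hx
        exact ⟨ne_of_gt (mul_pos (by linarith) (Real.exp_pos _)), hx⟩
      calc (0:ENNReal) < volume (Ioi s) := by simp [Real.volume_Ioi]
        _ ≤ _ := measure_mono hsub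
    · filter_upwards [ae_restrict_mem measurableSet_Ioi] with x hx
      have : s < x := hx
      exact mul_nonneg (by linarith) (Real.exp_pos _).le
    · have : (fun t : ℝ => (t - s) * Real.exp (-t ^ 2)) =
        fun t => t * Real.exp (-t ^ 2) - s * Real.exp (-t ^ 2) := by funext t; ring
      rw [this]
      exact hint1.sub hint2
  have heq : ∫ t in Ioi s, (t - s) * Real.exp (-t ^ 2)
      = (∫ t in Ioi s, t * Real.exp (-t ^ 2)) - s * ∫ t in Ioi s, Real.exp (-t ^ 2) := by
    rw [← integral_const_mul, ← integral_sub hint1 hint2]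
    congr 1; funext t; ring
  rw [heq, integral_id_exp_neg_sq s hs] at key
  linarith

lemma xi_eq_tail (r : ℝ) (hr : r < 0) :
    xi r = (2 / Real.sqrt Real.pi) * ∫ t in Ioi (-r / Real.sqrt 2), Real.exp (-t ^ 2) := by
  have hs2 : (0:ℝ) < Real.sqrt 2 := Real.sqrt_pos.mpr (by norm_num)
  set s : ℝ := -r / Real.sqrt 2 with hsdef
  have hs : 0 < s := div_pos (by linarith) hs2
  have hsym : ∫ t in (0:ℝ)..(r / Real.sqrt 2), Real.exp (-t ^ 2)
      = - ∫ t in (0:ℝ)..s, Real.exp (-t ^ 2) := by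
    have h1 : (∫ x in (0:ℝ)..s, Real.exp (-(-x) ^ 2)) = ∫ x in (-s)..(-0:ℝ), Real.exp (-x ^ 2) :=
      intervalIntegral.integral_comp_neg (fun x => Real.exp (-x ^ 2))
    simp only [neg_neg, neg_sq, neg_zero] at h1
    have h2 : -s = r / Real.sqrt 2 := by
      rw [hsdef]; ring
    rw [h2] at h1
    rw [intervalIntegral.integral_symm, ← h1]
  have hsplit : (∫ t in Ioi (0:ℝ), Real.exp (-t ^ 2))
      = (∫ t in (0:ℝ)..s, Real.exp (-t ^ 2)) + ∫ t in Ioi s, Real.exp (-t ^ 2) := by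
    rw [intervalIntegral.integral_of_le hs.le]
    rw [← setIntegral_union (Ioc_disjoint_Ioi le_rfl) measurableSet_Ioi
      ((integrableOn_exp_neg_sq 0).mono_set Ioc_subset_Ioi_self) (integrableOn_exp_neg_sq s)]
    rw [Ioc_union_Ioi_eq_Ioi hs.le]
  have hgauss : (∫ t in Ioi (0:ℝ), Real.exp (-t ^ 2)) = Real.sqrt Real.pi / 2 := by
    have := integral_gaussian_Ioi 1
    simpa using this
  have hpi : Real.sqrt Real.pi ≠ 0 := by positivity
  unfold xi erf
  rw [hsym]
  have : (∫ t in (0:ℝ)..s, Real.exp (-t ^ 2))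
      = Real.sqrt Real.pi / 2 - ∫ t in Ioi s, Real.exp (-t ^ 2) := by
    rw [← hgauss, hsplit]; ring
  rw [this]
  field_simp
  ring

lemma denom_pos (r : ℝ) :
    0 < r * Real.exp (r ^ 2 / 2) * xi r + Real.sqrt (2 / Real.pi) := by
  have hc : 0 < Real.sqrt (2 / Real.pi) := Real.sqrt_pos.mpr (by positivity)
  rcases le_or_gt 0 r with hr | hr
  · have hJ : 0 ≤ ∫ t in (0:ℝ)..(r / Real.sqrt 2), Real.exp (-t ^ 2) :=
      intervalIntegral.integral_nonneg (by positivity) (fun t _ => (Real.exp_pos _).le)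
    have hxi : 0 ≤ xi r := by
      unfold xi erf
      have : 0 ≤ (2 / Real.sqrt Real.pi) * ∫ t in (0:ℝ)..(r / Real.sqrt 2), Real.exp (-t ^ 2) :=
        mul_nonneg (by positivity) hJ
      linarith
    exact add_pos_of_nonneg_of_pos
      (mul_nonneg (mul_nonneg hr (Real.exp_pos _).le) hxi) hc
  · have hs2 : (0:ℝ) < Real.sqrt 2 := Real.sqrt_pos.mpr (by norm_num)
    have hsp : (0:ℝ) < Real.sqrt Real.pi := Real.sqrt_pos.mpr Real.pi_pos
    set s : ℝ := -r / Real.sqrt 2 with hsdef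
    have hs : 0 < s := div_pos (by linarith) hs2
    set I : ℝ := ∫ t in Ioi s, Real.exp (-t ^ 2) with hIdef
    have hxi : xi r = (2 / Real.sqrt Real.pi) * I := xi_eq_tail r hr
    have h22 : Real.sqrt 2 * Real.sqrt 2 = 2 := Real.mul_self_sqrt (by norm_num)
    have hrs : r = -(s * Real.sqrt 2) := by
      rw [hsdef]
      field_simp
    have hsq : r ^ 2 / 2 = s ^ 2 := by
      rw [hrs]
      have : (-(s * Real.sqrt 2)) ^ 2 = s ^ 2 * (Real.sqrt 2 * Real.sqrt 2) := by ring
      rw [this, h22]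
      ring
    have hsplit : Real.sqrt (2 / Real.pi) = Real.sqrt 2 / Real.sqrt Real.pi :=
      Real.sqrt_div (by norm_num) _
    have hI := gauss_tail s hs
    have key := mul_lt_mul_of_pos_left hI
      (show (0:ℝ) < 2 * Real.sqrt 2 * Real.exp (s ^ 2) / Real.sqrt Real.pi by positivity)
    have hrhs : 2 * Real.sqrt 2 * Real.exp (s ^ 2) / Real.sqrt Real.pi * (Real.exp (-s ^ 2) / 2)
        = Real.sqrt 2 / Real.sqrt Real.pi := by
      rw [Real.exp_neg]
      field_simp
    rw [hrhs] at key
    rw [hxi, hsq, hrs, hsplit]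
    have hring : -(s * Real.sqrt 2) * Real.exp (s ^ 2) * (2 / Real.sqrt Real.pi * I)
          + Real.sqrt 2 / Real.sqrt Real.pi
        = Real.sqrt 2 / Real.sqrt Real.pi
          - 2 * Real.sqrt 2 * Real.exp (s ^ 2) / Real.sqrt Real.pi * (s * I) := by
      ring
    rw [hring]
    linarith

lemma alg_aux (m p c E X r E2 : ℝ) (hm : m ≠ 0) (hp : p ≠ 0)
    (hD : r * (E * X) + c ≠ 0) (hc : c ^ 2 * p = 2) (hE2 : E2 = E * E) :
    -(m ^ 2 * (p * E2 * X ^ 2 - p * c * r * E * X - 2) / (p * (r * E * X + c) ^ 2)) / m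
      = (m * (r * E * X + c) * (r * (E * X) + c) -
          m * (E * X) * (E * X + r * (r * E * X + c))) / (r * (E * X) + c) ^ 2 := by
  subst hE2
  have hD' : (r * (E * X) + c) ^ 2 ≠ 0 := pow_ne_zero 2 hD
  have hD2 : p * (r * E * X + c) ^ 2 ≠ 0 := by
    apply mul_ne_zero hp
    rw [mul_assoc]
    exact hD'
  rw [← neg_div, div_div, div_eq_div_iff (mul_ne_zero hD2 hm) hD']
  linear_combination (-(m ^ 2 * (r * (E * X) + c) ^ 2)) * hc

/-- the derivative of `σ(M,·)` at `r` equals `−Var(M,r)/(M − a)`. -/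
theorem hasDerivAt_sigmaMr (a M : ℝ) (hM : a < M) (r : ℝ) :
    HasDerivAt (fun r : ℝ => sigmaMr a M r) (-(varII a M r) / (M - a)) r := by
  have hexp : HasDerivAt (fun r : ℝ => Real.exp (r ^ 2 / 2)) (r * Real.exp (r ^ 2 / 2)) r := by
    have hp : HasDerivAt (fun r : ℝ => r ^ 2 / 2) r r := by
      have := (hasDerivAt_pow 2 r).div_const 2
      simpa using this.congr_deriv (by push_cast; ring)
    simpa [mul_comm] using hp.exp
  set c : ℝ := Real.sqrt (2 / Real.pi) with hcdef
  have hg : HasDerivAt (fun r : ℝ => Real.exp (r ^ 2 / 2) * xi r)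
      (r * Real.exp (r ^ 2 / 2) * xi r + c) r := by
    have h := hexp.mul (hasDerivAt_xi r)
    have h1 : Real.exp (r ^ 2 / 2) * Real.exp (-(r ^ 2) / 2) = 1 := by
      rw [← Real.exp_add]; ring_nf; exact Real.exp_zero
    refine h.congr_deriv ?_
    rw [hcdef]
    linear_combination (Real.sqrt (2 / Real.pi)) * h1
  have hD : HasDerivAt (fun r : ℝ => r * (Real.exp (r ^ 2 / 2) * xi r) + c)
      (Real.exp (r ^ 2 / 2) * xi r + r * (r * Real.exp (r ^ 2 / 2) * xi r + c)) r := by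
    have := ((hasDerivAt_id r).mul hg).add_const c
    simpa using this
  have hne : r * (Real.exp (r ^ 2 / 2) * xi r) + c ≠ 0 := by
    have := denom_pos r
    rw [mul_assoc] at this
    exact ne_of_gt this
  have hq := (hg.const_mul (M - a)).div hD hne
  have hfun : (fun r : ℝ => sigmaMr a M r)
      = fun r : ℝ => (M - a) * (Real.exp (r ^ 2 / 2) * xi r) /
          (r * (Real.exp (r ^ 2 / 2) * xi r) + c) := by
    funext y
    unfold sigmaMr
    rw [hcdef, mul_assoc, mul_assoc]
  rw [hfun]
  refine hq.congr_deriv ?_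
  symm
  have hMa : M - a ≠ 0 := by linarith
  have hpi : (0:ℝ) < Real.pi := Real.pi_pos
  have hc2 : c ^ 2 * Real.pi = 2 := by
    rw [hcdef, Real.sq_sqrt (by positivity : (0:ℝ) ≤ 2 / Real.pi)]
    field_simp
  have h2pi : Real.sqrt (2 * Real.pi) = Real.pi * c := by
    rw [hcdef, show (2:ℝ) * Real.pi = Real.pi ^ 2 * (2 / Real.pi) by field_simp,
      Real.sqrt_mul (sq_nonneg _), Real.sqrt_sq hpi.le]
  have hE2 : Real.exp (r ^ 2) = Real.exp (r ^ 2 / 2) * Real.exp (r ^ 2 / 2) := by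
    rw [← Real.exp_add]; ring_nf
  unfold varII
  rw [h2pi]
  exact alg_aux (M - a) Real.pi c (Real.exp (r ^ 2 / 2)) (xi r) r (Real.exp (r ^ 2))
    hMa hpi.ne' hne hc2 hE2
end

section
/- For every a ∈ ℝ, μ ∈ ℝ and σ > 0, if the left-truncated Gaussian distribution on [a, ∞) with parameters μ, σ has mean M, then its variance equals σ² + (M − a)·(μ − a) − (M − a)². -/
open MeasureTheory Real Filter Set
open Topology

private lemma integrable_pow_gauss {b : ℝ} (hb : 0 < b) (n : ℕ) :
    Integrable (fun x : ℝ => x ^ n * Real.exp (-b * x ^ 2)) := by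
  have h : (-1 : ℝ) < (n : ℝ) := lt_of_lt_of_le (by norm_num) (Nat.cast_nonneg n)
  have := integrable_rpow_mul_exp_neg_mul_sq hb h
  simpa [Real.rpow_natCast] using this

private lemma integrable_pow_gauss_shift {b : ℝ} (hb : 0 < b) (μ : ℝ) (n : ℕ) :
    Integrable (fun x : ℝ => (x - μ) ^ n * Real.exp (-b * (x - μ) ^ 2)) := by
  have hmp : MeasurePreserving (fun x : ℝ => x - μ) volume volume :=
    measurePreserving_sub_right volume μ
  have hmeas : AEStronglyMeasurable (fun y : ℝ => y ^ n * Real.exp (-b * y ^ 2))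
      (volume : Measure ℝ) := by
    apply Continuous.aestronglyMeasurable
    fun_prop
  exact (hmp.integrable_comp hmeas).2 (integrable_pow_gauss hb n)

private lemma gauss_tendsto {b : ℝ} (hb : 0 < b) (μ : ℝ) (s : ℝ) :
    Tendsto (fun x : ℝ => |x - μ| ^ s * Real.exp (-b * (x - μ) ^ 2)) atTop (𝓝 0) := by
  have h1 : Tendsto (fun x : ℝ => x - μ) atTop (Filter.cocompact ℝ) := by
    have : Tendsto (fun x : ℝ => x - μ) atTop atTop :=
      tendsto_atTop_add_const_right atTop (-μ) tendsto_id
    exact this.mono_right (by rw [cocompact_eq_atBot_atTop]; exact le_sup_right)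
  exact (tendsto_rpow_abs_mul_exp_neg_mul_sq_cocompact hb s).comp h1

private lemma gauss_tendsto_zero {b : ℝ} (hb : 0 < b) (μ : ℝ) :
    Tendsto (fun x : ℝ => Real.exp (-b * (x - μ) ^ 2)) atTop (𝓝 0) := by
  have := gauss_tendsto hb μ 0
  simpa using this

private lemma key1 {b : ℝ} (hb : 0 < b) (a μ : ℝ) :
    ∫ x in Set.Ici a, (x - μ) * Real.exp (-b * (x - μ) ^ 2)
      = (2 * b)⁻¹ * Real.exp (-b * (a - μ) ^ 2) := by
  rw [MeasureTheory.integral_Ici_eq_integral_Ioi]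
  have hderiv : ∀ x ∈ Set.Ici a,
      HasDerivAt (fun x : ℝ => -(2 * b)⁻¹ * Real.exp (-b * (x - μ) ^ 2))
        ((x - μ) * Real.exp (-b * (x - μ) ^ 2)) x := by
    intro x _
    have h1 : HasDerivAt (fun x : ℝ => -b * (x - μ) ^ 2)
        (-b * ((2 : ℕ) * (x - μ) ^ (2 - 1) * 1)) x :=
      ((((hasDerivAt_id x).sub_const μ).pow 2)).const_mul (-b)
    have h2 := (h1.exp).const_mul (-(2 * b)⁻¹)
    refine h2.congr_deriv ?_
    have h2b : (2 * b)⁻¹ * (2 * b) = 1 := inv_mul_cancel₀ (by positivity)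
    linear_combination ((x - μ) * Real.exp (-b * (x - μ) ^ 2)) * h2b
  have hint : IntegrableOn (fun x : ℝ => (x - μ) * Real.exp (-b * (x - μ) ^ 2)) (Set.Ioi a) := by
    simpa using (integrable_pow_gauss_shift hb μ 1).integrableOn
  have htend : Tendsto (fun x : ℝ => -(2 * b)⁻¹ * Real.exp (-b * (x - μ) ^ 2)) atTop (𝓝 0) := by
    have := (gauss_tendsto_zero hb μ).const_mul (-(2 * b)⁻¹)
    simpa using this
  rw [integral_Ioi_of_hasDerivAt_of_tendsto' hderiv hint htend]
  ring

private lemma key2 {b : ℝ} (hb : 0 < b) (a μ : ℝ) :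
    ∫ x in Set.Ici a, (x - μ) ^ 2 * Real.exp (-b * (x - μ) ^ 2)
      = (2 * b)⁻¹ * (∫ x in Set.Ici a, Real.exp (-b * (x - μ) ^ 2))
        + (2 * b)⁻¹ * (a - μ) * Real.exp (-b * (a - μ) ^ 2) := by
  have h2int : IntegrableOn (fun x : ℝ => (x - μ) ^ 2 * Real.exp (-b * (x - μ) ^ 2))
      (Set.Ioi a) := (integrable_pow_gauss_shift hb μ 2).integrableOn
  have h0int : IntegrableOn (fun x : ℝ => Real.exp (-b * (x - μ) ^ 2)) (Set.Ioi a) := by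
    simpa using (integrable_pow_gauss_shift hb μ 0).integrableOn
  have hderiv : ∀ x ∈ Set.Ici a,
      HasDerivAt (fun x : ℝ => -(2 * b)⁻¹ * ((x - μ) * Real.exp (-b * (x - μ) ^ 2)))
        ((x - μ) ^ 2 * Real.exp (-b * (x - μ) ^ 2)
          - (2 * b)⁻¹ * Real.exp (-b * (x - μ) ^ 2)) x := by
    intro x _
    have h1 : HasDerivAt (fun x : ℝ => -b * (x - μ) ^ 2)
        (-b * ((2 : ℕ) * (x - μ) ^ (2 - 1) * 1)) x :=
      ((((hasDerivAt_id x).sub_const μ).pow 2)).const_mul (-b)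
    have h3 := (((hasDerivAt_id x).sub_const μ).mul h1.exp).const_mul (-(2 * b)⁻¹)
    simp only [id_eq] at h3
    refine h3.congr_deriv ?_
    have h2b : (2 * b)⁻¹ * (2 * b) = 1 := inv_mul_cancel₀ (by positivity)
    linear_combination ((x - μ) ^ 2 * Real.exp (-b * (x - μ) ^ 2)) * h2b
  have hint : IntegrableOn (fun x : ℝ => (x - μ) ^ 2 * Real.exp (-b * (x - μ) ^ 2)
      - (2 * b)⁻¹ * Real.exp (-b * (x - μ) ^ 2)) (Set.Ioi a) :=
    h2int.sub (h0int.const_mul _)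
  have htend : Tendsto (fun x : ℝ => -(2 * b)⁻¹ * ((x - μ) * Real.exp (-b * (x - μ) ^ 2)))
      atTop (𝓝 0) := by
    have hbound : ∀ x : ℝ, ‖-(2 * b)⁻¹ * ((x - μ) * Real.exp (-b * (x - μ) ^ 2))‖
        ≤ (2 * b)⁻¹ * (|x - μ| ^ (1 : ℝ) * Real.exp (-b * (x - μ) ^ 2)) := by
      intro x
      rw [Real.rpow_one, norm_eq_abs, abs_mul, abs_mul, abs_neg, abs_inv,
        abs_of_nonneg (by positivity : (0:ℝ) ≤ 2 * b),
        abs_of_nonneg (Real.exp_pos _).le]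
    have hlim : Tendsto (fun x : ℝ => (2 * b)⁻¹ * (|x - μ| ^ (1 : ℝ)
        * Real.exp (-b * (x - μ) ^ 2))) atTop (𝓝 0) := by
      have := (gauss_tendsto hb μ 1).const_mul (2 * b)⁻¹
      simpa using this
    exact squeeze_zero_norm hbound hlim
  have := integral_Ioi_of_hasDerivAt_of_tendsto' hderiv hint htend
  rw [integral_sub h2int (h0int.const_mul _), integral_const_mul] at this
  rw [MeasureTheory.integral_Ici_eq_integral_Ioi,
    MeasureTheory.integral_Ici_eq_integral_Ioi]
  linear_combination this

/-- if the left-truncated Gaussian on `[a, ∞)` with parameters `μ, σ` has mean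
`M`, then its variance equals `σ² + (M − a)(μ − a) − (M − a)²`. -/
theorem lVar_eq_sigma_mu (a μ σ M : ℝ) (hσ : 0 < σ) (hM : lMean a μ σ = M) :
    lVar a μ σ = σ ^ 2 + (M - a) * (μ - a) - (M - a) ^ 2 := by
  set b : ℝ := (2 * σ ^ 2)⁻¹ with hbdef
  have hb : 0 < b := by positivity
  have hc : (2 * b)⁻¹ = σ ^ 2 := by
    rw [hbdef]
    field_simp
  have heq : ∀ x : ℝ, -(x - μ) ^ 2 / (2 * σ ^ 2) = -b * (x - μ) ^ 2 := by
    intro x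
    rw [hbdef, div_eq_mul_inv]
    ring
  -- notation
  set g : ℝ → ℝ := fun x => Real.exp (-b * (x - μ) ^ 2) with hgdef
  have hint : ∀ n : ℕ, IntegrableOn (fun x : ℝ => (x - μ) ^ n * g x) (Set.Ici a) :=
    fun n => (integrable_pow_gauss_shift hb μ n).integrableOn
  have hint0 : IntegrableOn g (Set.Ici a) := by
    have := hint 0
    simpa using this
  have hint1 : IntegrableOn (fun x : ℝ => (x - μ) * g x) (Set.Ici a) := by
    have := hint 1
    simpa using this
  have hZdef : lZ a μ σ = ∫ x in Set.Ici a, g x := by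
    rw [lZ]; congr 1; funext x; rw [heq]
  set Z : ℝ := ∫ x in Set.Ici a, g x with hZsym
  have hZpos : 0 < Z := by
    rw [hZsym]
    rw [setIntegral_pos_iff_support_of_nonneg_ae]
    · have hsupp : Function.support g = Set.univ := by
        ext x; simp [hgdef, Real.exp_ne_zero]
      rw [hsupp, Set.univ_inter, Real.volume_Ici]
      exact ENNReal.zero_lt_top
    · exact Filter.Eventually.of_forall fun x => (Real.exp_pos _).le
    · exact hint0
  set E : ℝ := Real.exp (-b * (a - μ) ^ 2) with hEsym
  have hI1 : ∫ x in Set.Ici a, (x - μ) * g x = σ ^ 2 * E := by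
    rw [← hc]; exact key1 hb a μ
  have hI2 : ∫ x in Set.Ici a, (x - μ) ^ 2 * g x = σ ^ 2 * Z + σ ^ 2 * (a - μ) * E := by
    rw [← hc]; exact key2 hb a μ
  -- the mean relation
  have hIX : ∫ x in Set.Ici a, x * g x = σ ^ 2 * E + μ * Z := by
    have hsplit : (fun x : ℝ => x * g x)
        = fun x : ℝ => (x - μ) * g x + μ * g x := by
      funext x; ring
    rw [hsplit, integral_add hint1 (hint0.const_mul μ), hI1, integral_const_mul]
  have hMean : lMean a μ σ = (σ ^ 2 * E + μ * Z) / Z := by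
    rw [lMean, hZdef, ← hIX]
    congr 1
    apply setIntegral_congr_fun measurableSet_Ici
    intro x _
    dsimp only
    rw [heq]
  have hME : σ ^ 2 * E = M * Z - μ * Z := by
    rw [hMean] at hM
    field_simp at hM
    linarith
  -- the variance
  have hIV : ∫ x in Set.Ici a, (x - M) ^ 2 * g x
      = (σ ^ 2 * Z + σ ^ 2 * (a - μ) * E) + 2 * (μ - M) * (σ ^ 2 * E) + (μ - M) ^ 2 * Z := by
    have hsplit : (fun x : ℝ => (x - M) ^ 2 * g x)
        = fun x : ℝ => ((x - μ) ^ 2 * g x + 2 * (μ - M) * ((x - μ) * g x))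
            + (μ - M) ^ 2 * g x := by
      funext x; ring
    have hA : IntegrableOn
        (fun x : ℝ => (x - μ) ^ 2 * g x + 2 * (μ - M) * ((x - μ) * g x)) (Set.Ici a) :=
      (hint 2).add (hint1.const_mul _)
    rw [hsplit, integral_add hA (hint0.const_mul _),
      integral_add (hint 2) (hint1.const_mul _), integral_const_mul, integral_const_mul,
      hI1, hI2]
  have hVar : lVar a μ σ
      = (∫ x in Set.Ici a, (x - M) ^ 2 * g x) / Z := by
    rw [lVar, hZdef, hM]
    congr 1
    apply setIntegral_congr_fun measurableSet_Ici
    intro x _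
    dsimp only
    rw [heq]
  rw [hVar, hIV, div_eq_iff hZpos.ne']
  linear_combination ((a - μ) + 2 * (μ - M)) * hME
end

section
/- Fix a ∈ ℝ and M > a, and let σ(M,r) = (M − a)·e^{r²/2}·ξ(r) / (r·e^{r²/2}·ξ(r) + √(2/π)) and Var(M,r) be the corresponding variance of the left-truncated Gaussian on [a, ∞) with mean M. Then lim_{r → 0} Var(M,r) = (M − a)²·(π − 2)/2 and lim_{r → 0} σ(M,r) = (M − a)·√(π/2). -/
open MeasureTheory Real Filter Set

@[continuity, fun_prop]
lemma continuous_erf : Continuous erf := by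
  apply continuous_const.mul
  exact intervalIntegral.continuous_primitive
    (fun a b => ((Real.continuous_exp.comp (by continuity)).intervalIntegrable a b)) 0

lemma erf_zero : erf 0 = 0 := by simp [erf]

@[continuity, fun_prop]
lemma continuous_xi : Continuous xi := by
  unfold xi
  exact (continuous_erf.comp (continuous_id.div_const _)).add continuous_const

lemma xi_zero : xi 0 = 1 := by simp [xi, erf_zero]

/-- `Var(M,r) → (M − a)²·(π − 2)/2` and `σ(M,r) → (M − a)·√(π/2)` as `r → 0`. -/
theorem tendsto_varII_sigmaMr_zero (a M : ℝ) (hM : a < M) :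
    Filter.Tendsto (fun r : ℝ => varII a M r) (nhds 0)
        (nhds ((M - a) ^ 2 * (Real.pi - 2) / 2)) ∧
      Filter.Tendsto (fun r : ℝ => sigmaMr a M r) (nhds 0)
        (nhds ((M - a) * Real.sqrt (Real.pi / 2))) := by
  have hpi : (0:ℝ) < Real.pi := Real.pi_pos
  have hs : (0:ℝ) < Real.sqrt (2 / Real.pi) := Real.sqrt_pos.2 (by positivity)
  have hsq : Real.sqrt (2 / Real.pi) ^ 2 = 2 / Real.pi :=
    Real.sq_sqrt (by positivity)
  constructor
  · have h : ContinuousAt (fun r : ℝ => varII a M r) 0 := by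
      unfold varII
      apply ContinuousAt.div
      · fun_prop
      · fun_prop
      · simp only [xi_zero]
        rw [show (0:ℝ) * Real.exp (0 ^ 2 / 2) * 1 + Real.sqrt (2 / Real.pi)
            = Real.sqrt (2 / Real.pi) by ring, hsq]
        field_simp
        norm_num
    have heq : varII a M 0 = (M - a) ^ 2 * (Real.pi - 2) / 2 := by
      simp only [varII, xi_zero]
      rw [show (0:ℝ) * Real.exp (0 ^ 2 / 2) * 1 + Real.sqrt (2 / Real.pi)
          = Real.sqrt (2 / Real.pi) by ring, hsq]
      norm_num
      field_simp
    exact heq ▸ h.tendsto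
  · have h : ContinuousAt (fun r : ℝ => sigmaMr a M r) 0 := by
      unfold sigmaMr
      apply ContinuousAt.div
      · fun_prop
      · fun_prop
      · simp only [xi_zero]
        rw [show (0:ℝ) * Real.exp (0 ^ 2 / 2) * 1 + Real.sqrt (2 / Real.pi)
            = Real.sqrt (2 / Real.pi) by ring]
        exact hs.ne'
    have heq : sigmaMr a M 0 = (M - a) * Real.sqrt (Real.pi / 2) := by
      simp only [sigmaMr, xi_zero]
      rw [show (0:ℝ) * Real.exp (0 ^ 2 / 2) * 1 + Real.sqrt (2 / Real.pi)
          = Real.sqrt (2 / Real.pi) by ring]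
      norm_num
      have h2 : Real.sqrt 2 ≠ 0 := by positivity
      have hp : Real.sqrt Real.pi ≠ 0 := by positivity
      field_simp
    exact heq ▸ h.tendsto
end
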